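/- Let ψ₁, ψ₂ : ℂ² × ℂ⁴ → ℂ be entire (complex-analytic) functions of (u₁, u₃; λ₄, λ₆, λ₈, λ₁₀), each satisfying the system of heat equations ℓᵢ ψ = Hᵢ ψ for i = 0, 2, 4, 6, together with the initial condition ψ(u₁, u₃; 0, 0, 0, 0) = u₃ − (1/3)u₁³. Then ψ₁ = ψ₂. (The entire function satisfying this system and initial condition is the genus-2 hyperelliptic sigma function σ(u; λ), which is hence uniquely determined by them.) -/

import Mathlib

/- STATEMENT 14: uniqueness of the genus-2 sigma function. Any two entire functions of
   (u₁, u₃; λ₄, λ₆, λ₈, λ₁₀) satisfying the system of heat equations ℓᵢψ = Hᵢψ,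
   i = 0, 2, 4, 6, and the initial condition ψ(u; 0) = u₃ − (1/3)u₁³ coincide. -/

noncomputable section

/-- Functions of (u₁, u₃, λ₄, λ₆, λ₈, λ₁₀), curried. -/
abbrev F6 : Type := ℂ → ℂ → ℂ → ℂ → ℂ → ℂ → ℂ

/-- Partial derivative in u₁. -/
def Du1 (ψ : F6) : F6 := fun u1 u3 l4 l6 l8 l10 => deriv (fun t => ψ t u3 l4 l6 l8 l10) u1

/-- Partial derivative in u₃. -/
def Du3 (ψ : F6) : F6 := fun u1 u3 l4 l6 l8 l10 => deriv (fun t => ψ u1 t l4 l6 l8 l10) u3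

/-- Partial derivative in λ₄. -/
def Dl4 (ψ : F6) : F6 := fun u1 u3 l4 l6 l8 l10 => deriv (fun t => ψ u1 u3 t l6 l8 l10) l4

/-- Partial derivative in λ₆. -/
def Dl6 (ψ : F6) : F6 := fun u1 u3 l4 l6 l8 l10 => deriv (fun t => ψ u1 u3 l4 t l8 l10) l6

/-- Partial derivative in λ₈. -/
def Dl8 (ψ : F6) : F6 := fun u1 u3 l4 l6 l8 l10 => deriv (fun t => ψ u1 u3 l4 l6 t l10) l8

/-- Partial derivative in λ₁₀. -/
def Dl10 (ψ : F6) : F6 := fun u1 u3 l4 l6 l8 l10 => deriv (fun t => ψ u1 u3 l4 l6 l8 t) l10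

/-- ψ is an entire (complex-analytic) function of all six variables. -/
def IsEntire6 (ψ : F6) : Prop :=
  AnalyticOnNhd ℂ
    (fun p : ℂ × ℂ × ℂ × ℂ × ℂ × ℂ =>
      ψ p.1 p.2.1 p.2.2.1 p.2.2.2.1 p.2.2.2.2.1 p.2.2.2.2.2)
    Set.univ

/-- The system of heat equations ℓᵢψ = Hᵢψ, i = 0, 2, 4, 6, together with the initial
condition ψ(u₁, u₃; 0, 0, 0, 0) = u₃ − (1/3)u₁³. -/
def SigmaHeatSolution (ψ : F6) : Prop :=
  -- ℓ₀ψ = H₀ψ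
  (∀ u1 u3 l4 l6 l8 l10 : ℂ,
    4 * l4 * Dl4 ψ u1 u3 l4 l6 l8 l10 + 6 * l6 * Dl6 ψ u1 u3 l4 l6 l8 l10 +
      8 * l8 * Dl8 ψ u1 u3 l4 l6 l8 l10 + 10 * l10 * Dl10 ψ u1 u3 l4 l6 l8 l10 =
    u1 * Du1 ψ u1 u3 l4 l6 l8 l10 + 3 * u3 * Du3 ψ u1 u3 l4 l6 l8 l10 -
      3 * ψ u1 u3 l4 l6 l8 l10) ∧
  -- ℓ₂ψ = H₂ψ
  (∀ u1 u3 l4 l6 l8 l10 : ℂ,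
    6 * l6 * Dl4 ψ u1 u3 l4 l6 l8 l10 +
      (8 * l8 - (12 / 5) * l4 ^ 2) * Dl6 ψ u1 u3 l4 l6 l8 l10 +
      (10 * l10 - (8 / 5) * l4 * l6) * Dl8 ψ u1 u3 l4 l6 l8 l10 -
      (4 / 5) * l4 * l8 * Dl10 ψ u1 u3 l4 l6 l8 l10 =
    (1 / 2) * Du1 (Du1 ψ) u1 u3 l4 l6 l8 l10 -
      (4 / 5) * l4 * u3 * Du1 ψ u1 u3 l4 l6 l8 l10 +
      u1 * Du3 ψ u1 u3 l4 l6 l8 l10 +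
      (-(3 / 10) * l4 * u1 ^ 2 + (1 / 10) * (15 * l8 - 4 * l4 ^ 2) * u3 ^ 2) *
        ψ u1 u3 l4 l6 l8 l10) ∧
  -- ℓ₄ψ = H₄ψ
  (∀ u1 u3 l4 l6 l8 l10 : ℂ,
    8 * l8 * Dl4 ψ u1 u3 l4 l6 l8 l10 +
      (10 * l10 - (8 / 5) * l4 * l6) * Dl6 ψ u1 u3 l4 l6 l8 l10 +
      (4 * l4 * l8 - (12 / 5) * l6 ^ 2) * Dl8 ψ u1 u3 l4 l6 l8 l10 +
      (6 * l4 * l10 - (6 / 5) * l6 * l8) * Dl10 ψ u1 u3 l4 l6 l8 l10 =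
    Du1 (Du3 ψ) u1 u3 l4 l6 l8 l10 -
      (6 / 5) * l6 * u3 * Du1 ψ u1 u3 l4 l6 l8 l10 +
      l4 * u3 * Du3 ψ u1 u3 l4 l6 l8 l10 +
      (-(1 / 5) * l6 * u1 ^ 2 + l8 * u1 * u3 +
        (1 / 10) * (30 * l10 - 6 * l6 * l4) * u3 ^ 2 - l4) * ψ u1 u3 l4 l6 l8 l10) ∧
  -- ℓ₆ψ = H₆ψ
  (∀ u1 u3 l4 l6 l8 l10 : ℂ,
    10 * l10 * Dl4 ψ u1 u3 l4 l6 l8 l10 -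
      (4 / 5) * l4 * l8 * Dl6 ψ u1 u3 l4 l6 l8 l10 +
      (6 * l4 * l10 - (6 / 5) * l6 * l8) * Dl8 ψ u1 u3 l4 l6 l8 l10 +
      (4 * l6 * l10 - (8 / 5) * l8 ^ 2) * Dl10 ψ u1 u3 l4 l6 l8 l10 =
    (1 / 2) * Du3 (Du3 ψ) u1 u3 l4 l6 l8 l10 -
      (3 / 5) * l8 * u3 * Du1 ψ u1 u3 l4 l6 l8 l10 +
      (-(1 / 10) * l8 * u1 ^ 2 + 2 * l10 * u1 * u3 - (3 / 10) * l8 * l4 * u3 ^ 2 -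
        (1 / 2) * l6) * ψ u1 u3 l4 l6 l8 l10) ∧
  -- initial condition
  (∀ u1 u3 : ℂ, ψ u1 u3 0 0 0 0 = u3 - (1 / 3) * u1 ^ 3)

open Set

noncomputable section GenPd

variable {E : Type*} [NormedAddCommGroup E] [NormedSpace ℂ E]

/-- directional partial derivative -/
def pd (v : E) (F : E → ℂ) : E → ℂ := fun x => fderiv ℂ F x v

lemma pd_entire {F : E → ℂ} (hF : AnalyticOnNhd ℂ F univ) (v : E) :
    AnalyticOnNhd ℂ (pd v F) univ := by
  have h1 : AnalyticOnNhd ℂ (fderiv ℂ F) univ := hF.fderiv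
  have h2 := (ContinuousLinearMap.apply ℂ ℂ v).comp_analyticOnNhd h1
  exact h2

lemma hasDerivAt_slice {F : E → ℂ} (hF : AnalyticOnNhd ℂ F univ) (a v : E) (t : ℂ) :
    HasDerivAt (fun s : ℂ => F (a + s • v)) (pd v F (a + t • v)) t := by
  have hd : HasFDerivAt F (fderiv ℂ F (a + t • v)) (a + t • v) :=
    ((hF _ (mem_univ _)).differentiableAt).hasFDerivAt
  have hγ : HasDerivAt (fun s : ℂ => a + s • v) v t := by
    simpa using ((hasDerivAt_id t).smul_const v).const_add a
  exact hd.comp_hasDerivAt t hγ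

lemma deriv_slice {F : E → ℂ} (hF : AnalyticOnNhd ℂ F univ) (a v : E) (t : ℂ) :
    deriv (fun s : ℂ => F (a + s • v)) t = pd v F (a + t • v) :=
  (hasDerivAt_slice hF a v t).deriv

lemma pd_comm {F : E → ℂ} (hF : AnalyticOnNhd ℂ F univ) (v w x : E) :
    pd v (pd w F) x = pd w (pd v F) x := by
  have hf' : AnalyticOnNhd ℂ (fderiv ℂ F) univ := hF.fderiv
  have hx : HasFDerivAt (fderiv ℂ F) (fderiv ℂ (fderiv ℂ F) x) x :=
    ((hf' x (mem_univ _)).differentiableAt).hasFDerivAt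
  have hf : ∀ y, HasFDerivAt F (fderiv ℂ F y) y := fun y =>
    ((hF y (mem_univ _)).differentiableAt).hasFDerivAt
  have hsymm := second_derivative_symmetric hf hx v w
  have key : ∀ u z : E, pd u (pd z F) x = (fderiv ℂ (fderiv ℂ F) x u) z := by
    intro u z
    have hc : HasFDerivAt (fun y => (fderiv ℂ F y) z)
        (((fderiv ℂ F x).comp (0 : E →L[ℂ] E)) + (fderiv ℂ (fderiv ℂ F) x).flip z) x :=
      hx.clm_apply (hasFDerivAt_const z x)
    have : fderiv ℂ (fun y => (fderiv ℂ F y) z) x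
        = (((fderiv ℂ F x).comp (0 : E →L[ℂ] E)) + (fderiv ℂ (fderiv ℂ F) x).flip z) :=
      hc.fderiv
    show fderiv ℂ (fun y => (fderiv ℂ F y) z) x u = _
    rw [this]
    simp
  rw [key v w, key w v, hsymm]

end GenPd

noncomputable section GenIter
open Function
variable {E : Type*} [NormedAddCommGroup E] [NormedSpace ℂ E]

lemma slice_entire {F : E → ℂ} (hF : AnalyticOnNhd ℂ F univ) (a v : E) :
    AnalyticOnNhd ℂ (fun s : ℂ => F (a + s • v)) (univ : Set ℂ) := by
  have hcurve : AnalyticOnNhd ℂ (fun s : ℂ => a + s • v) (univ : Set ℂ) :=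
    analyticOnNhd_const.add ((ContinuousLinearMap.toSpanSingleton ℂ v).analyticOnNhd (univ : Set ℂ))
  exact hF.comp hcurve (Set.mapsTo_univ _ _)

lemma pd_iter_entire {F : E → ℂ} (hF : AnalyticOnNhd ℂ F univ) (v : E) (N : ℕ) :
    AnalyticOnNhd ℂ ((pd v)^[N] F) univ := by
  induction N with
  | zero => exact hF
  | succ n ih => rw [Function.iterate_succ_apply']; exact pd_entire ih v

lemma iteratedDeriv_slice {F : E → ℂ} (hF : AnalyticOnNhd ℂ F univ) (a v : E) (N : ℕ) (t : ℂ) :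
    iteratedDeriv N (fun s : ℂ => F (a + s • v)) t = (pd v)^[N] F (a + t • v) := by
  induction N generalizing F with
  | zero => simp
  | succ n ih =>
    rw [iteratedDeriv_succ']
    have hd : deriv (fun s : ℂ => F (a + s • v)) = fun s : ℂ => (pd v F) (a + s • v) :=
      funext fun s => deriv_slice hF a v s
    rw [hd, ih (pd_entire hF v), Function.iterate_succ_apply]

lemma pd_iter_comm {F : E → ℂ} (hF : AnalyticOnNhd ℂ F univ) (v w : E) (N : ℕ) :
    (pd v)^[N] (pd w F) = pd w ((pd v)^[N] F) := by
  induction N generalizing F with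
  | zero => rfl
  | succ n ih =>
    rw [Function.iterate_succ_apply, Function.iterate_succ_apply]
    rw [show pd v (pd w F) = pd w (pd v F) from funext fun x => pd_comm hF v w x]
    exact ih (pd_entire hF v)

end GenIter

namespace SigmaUniq
open Set

/-- uncurried domain -/
abbrev E6 : Type := ℂ × ℂ × ℂ × ℂ × ℂ × ℂ

/-- uncurry -/
def U6 (ψ : F6) : E6 → ℂ :=
  fun p => ψ p.1 p.2.1 p.2.2.1 p.2.2.2.1 p.2.2.2.2.1 p.2.2.2.2.2

lemma isEntire_iff (ψ : F6) : IsEntire6 ψ ↔ AnalyticOnNhd ℂ (U6 ψ) Set.univ := Iff.rfl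

def veu1 : E6 := (1, 0, 0, 0, 0, 0)
def veu3 : E6 := (0, 1, 0, 0, 0, 0)
def vel4 : E6 := (0, 0, 1, 0, 0, 0)
def vel6 : E6 := (0, 0, 0, 1, 0, 0)
def vel8 : E6 := (0, 0, 0, 0, 1, 0)
def vel10 : E6 := (0, 0, 0, 0, 0, 1)

variable {ψ : F6}

lemma Du1_eq_pd (hψ : IsEntire6 ψ) (u1 u3 l4 l6 l8 l10 : ℂ) :
    Du1 ψ u1 u3 l4 l6 l8 l10 = pd veu1 (U6 ψ) (u1, u3, l4, l6, l8, l10) := by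
  have h := deriv_slice hψ ((0, u3, l4, l6, l8, l10) : E6) veu1 u1
  have e2 : ((0, u3, l4, l6, l8, l10) : E6) + u1 • veu1 = ((u1, u3, l4, l6, l8, l10) : E6) := by
    simp [veu1, Prod.mk_add_mk, Prod.smul_mk, smul_eq_mul, mul_one, mul_zero, add_zero, zero_add]
  rw [e2] at h
  refine Eq.trans ?_ h
  show deriv (fun t => ψ t u3 l4 l6 l8 l10) u1 = _
  congr 1
  funext s
  simp [U6, veu1, Prod.mk_add_mk, Prod.smul_mk, smul_eq_mul, mul_one, mul_zero, add_zero, zero_add]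

lemma U6_Du1 (hψ : IsEntire6 ψ) : U6 (Du1 ψ) = pd veu1 (U6 ψ) := by
  funext p
  exact Du1_eq_pd hψ p.1 p.2.1 p.2.2.1 p.2.2.2.1 p.2.2.2.2.1 p.2.2.2.2.2

lemma entire_Du1 (hψ : IsEntire6 ψ) : IsEntire6 (Du1 ψ) := by
  rw [isEntire_iff, U6_Du1 hψ]; exact pd_entire hψ _

lemma diff_slice_Du1 (hψ : IsEntire6 ψ) (u1 u3 l4 l6 l8 l10 : ℂ) :
    Differentiable ℂ (fun t : ℂ => (fun t => ψ t u3 l4 l6 l8 l10 : ℂ → ℂ) t) := by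
  have e : (fun t : ℂ => (fun t => ψ t u3 l4 l6 l8 l10 : ℂ → ℂ) t)
      = (fun s : ℂ => U6 ψ (((0, u3, l4, l6, l8, l10) : E6) + s • veu1)) := by
    funext s
    simp [U6, veu1, Prod.mk_add_mk, Prod.smul_mk, smul_eq_mul, mul_one, mul_zero, add_zero, zero_add]
  rw [e]
  exact fun t => (hasDerivAt_slice hψ _ veu1 t).differentiableAt

lemma Du3_eq_pd (hψ : IsEntire6 ψ) (u1 u3 l4 l6 l8 l10 : ℂ) :
    Du3 ψ u1 u3 l4 l6 l8 l10 = pd veu3 (U6 ψ) (u1, u3, l4, l6, l8, l10) := by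
  have h := deriv_slice hψ ((u1, 0, l4, l6, l8, l10) : E6) veu3 u3
  have e2 : ((u1, 0, l4, l6, l8, l10) : E6) + u3 • veu3 = ((u1, u3, l4, l6, l8, l10) : E6) := by
    simp [veu3, Prod.mk_add_mk, Prod.smul_mk, smul_eq_mul, mul_one, mul_zero, add_zero, zero_add]
  rw [e2] at h
  refine Eq.trans ?_ h
  show deriv (fun t => ψ u1 t l4 l6 l8 l10) u3 = _
  congr 1
  funext s
  simp [U6, veu3, Prod.mk_add_mk, Prod.smul_mk, smul_eq_mul, mul_one, mul_zero, add_zero, zero_add]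

lemma U6_Du3 (hψ : IsEntire6 ψ) : U6 (Du3 ψ) = pd veu3 (U6 ψ) := by
  funext p
  exact Du3_eq_pd hψ p.1 p.2.1 p.2.2.1 p.2.2.2.1 p.2.2.2.2.1 p.2.2.2.2.2

lemma entire_Du3 (hψ : IsEntire6 ψ) : IsEntire6 (Du3 ψ) := by
  rw [isEntire_iff, U6_Du3 hψ]; exact pd_entire hψ _

lemma diff_slice_Du3 (hψ : IsEntire6 ψ) (u1 u3 l4 l6 l8 l10 : ℂ) :
    Differentiable ℂ (fun t : ℂ => (fun t => ψ u1 t l4 l6 l8 l10 : ℂ → ℂ) t) := by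
  have e : (fun t : ℂ => (fun t => ψ u1 t l4 l6 l8 l10 : ℂ → ℂ) t)
      = (fun s : ℂ => U6 ψ (((u1, 0, l4, l6, l8, l10) : E6) + s • veu3)) := by
    funext s
    simp [U6, veu3, Prod.mk_add_mk, Prod.smul_mk, smul_eq_mul, mul_one, mul_zero, add_zero, zero_add]
  rw [e]
  exact fun t => (hasDerivAt_slice hψ _ veu3 t).differentiableAt

lemma Dl4_eq_pd (hψ : IsEntire6 ψ) (u1 u3 l4 l6 l8 l10 : ℂ) :
    Dl4 ψ u1 u3 l4 l6 l8 l10 = pd vel4 (U6 ψ) (u1, u3, l4, l6, l8, l10) := by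
  have h := deriv_slice hψ ((u1, u3, 0, l6, l8, l10) : E6) vel4 l4
  have e2 : ((u1, u3, 0, l6, l8, l10) : E6) + l4 • vel4 = ((u1, u3, l4, l6, l8, l10) : E6) := by
    simp [vel4, Prod.mk_add_mk, Prod.smul_mk, smul_eq_mul, mul_one, mul_zero, add_zero, zero_add]
  rw [e2] at h
  refine Eq.trans ?_ h
  show deriv (fun t => ψ u1 u3 t l6 l8 l10) l4 = _
  congr 1
  funext s
  simp [U6, vel4, Prod.mk_add_mk, Prod.smul_mk, smul_eq_mul, mul_one, mul_zero, add_zero, zero_add]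

lemma U6_Dl4 (hψ : IsEntire6 ψ) : U6 (Dl4 ψ) = pd vel4 (U6 ψ) := by
  funext p
  exact Dl4_eq_pd hψ p.1 p.2.1 p.2.2.1 p.2.2.2.1 p.2.2.2.2.1 p.2.2.2.2.2

lemma entire_Dl4 (hψ : IsEntire6 ψ) : IsEntire6 (Dl4 ψ) := by
  rw [isEntire_iff, U6_Dl4 hψ]; exact pd_entire hψ _

lemma diff_slice_Dl4 (hψ : IsEntire6 ψ) (u1 u3 l4 l6 l8 l10 : ℂ) :
    Differentiable ℂ (fun t : ℂ => (fun t => ψ u1 u3 t l6 l8 l10 : ℂ → ℂ) t) := by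
  have e : (fun t : ℂ => (fun t => ψ u1 u3 t l6 l8 l10 : ℂ → ℂ) t)
      = (fun s : ℂ => U6 ψ (((u1, u3, 0, l6, l8, l10) : E6) + s • vel4)) := by
    funext s
    simp [U6, vel4, Prod.mk_add_mk, Prod.smul_mk, smul_eq_mul, mul_one, mul_zero, add_zero, zero_add]
  rw [e]
  exact fun t => (hasDerivAt_slice hψ _ vel4 t).differentiableAt

lemma Dl6_eq_pd (hψ : IsEntire6 ψ) (u1 u3 l4 l6 l8 l10 : ℂ) :
    Dl6 ψ u1 u3 l4 l6 l8 l10 = pd vel6 (U6 ψ) (u1, u3, l4, l6, l8, l10) := by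
  have h := deriv_slice hψ ((u1, u3, l4, 0, l8, l10) : E6) vel6 l6
  have e2 : ((u1, u3, l4, 0, l8, l10) : E6) + l6 • vel6 = ((u1, u3, l4, l6, l8, l10) : E6) := by
    simp [vel6, Prod.mk_add_mk, Prod.smul_mk, smul_eq_mul, mul_one, mul_zero, add_zero, zero_add]
  rw [e2] at h
  refine Eq.trans ?_ h
  show deriv (fun t => ψ u1 u3 l4 t l8 l10) l6 = _
  congr 1
  funext s
  simp [U6, vel6, Prod.mk_add_mk, Prod.smul_mk, smul_eq_mul, mul_one, mul_zero, add_zero, zero_add]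

lemma U6_Dl6 (hψ : IsEntire6 ψ) : U6 (Dl6 ψ) = pd vel6 (U6 ψ) := by
  funext p
  exact Dl6_eq_pd hψ p.1 p.2.1 p.2.2.1 p.2.2.2.1 p.2.2.2.2.1 p.2.2.2.2.2

lemma entire_Dl6 (hψ : IsEntire6 ψ) : IsEntire6 (Dl6 ψ) := by
  rw [isEntire_iff, U6_Dl6 hψ]; exact pd_entire hψ _

lemma diff_slice_Dl6 (hψ : IsEntire6 ψ) (u1 u3 l4 l6 l8 l10 : ℂ) :
    Differentiable ℂ (fun t : ℂ => (fun t => ψ u1 u3 l4 t l8 l10 : ℂ → ℂ) t) := by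
  have e : (fun t : ℂ => (fun t => ψ u1 u3 l4 t l8 l10 : ℂ → ℂ) t)
      = (fun s : ℂ => U6 ψ (((u1, u3, l4, 0, l8, l10) : E6) + s • vel6)) := by
    funext s
    simp [U6, vel6, Prod.mk_add_mk, Prod.smul_mk, smul_eq_mul, mul_one, mul_zero, add_zero, zero_add]
  rw [e]
  exact fun t => (hasDerivAt_slice hψ _ vel6 t).differentiableAt

lemma Dl8_eq_pd (hψ : IsEntire6 ψ) (u1 u3 l4 l6 l8 l10 : ℂ) :
    Dl8 ψ u1 u3 l4 l6 l8 l10 = pd vel8 (U6 ψ) (u1, u3, l4, l6, l8, l10) := by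
  have h := deriv_slice hψ ((u1, u3, l4, l6, 0, l10) : E6) vel8 l8
  have e2 : ((u1, u3, l4, l6, 0, l10) : E6) + l8 • vel8 = ((u1, u3, l4, l6, l8, l10) : E6) := by
    simp [vel8, Prod.mk_add_mk, Prod.smul_mk, smul_eq_mul, mul_one, mul_zero, add_zero, zero_add]
  rw [e2] at h
  refine Eq.trans ?_ h
  show deriv (fun t => ψ u1 u3 l4 l6 t l10) l8 = _
  congr 1
  funext s
  simp [U6, vel8, Prod.mk_add_mk, Prod.smul_mk, smul_eq_mul, mul_one, mul_zero, add_zero, zero_add]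

lemma U6_Dl8 (hψ : IsEntire6 ψ) : U6 (Dl8 ψ) = pd vel8 (U6 ψ) := by
  funext p
  exact Dl8_eq_pd hψ p.1 p.2.1 p.2.2.1 p.2.2.2.1 p.2.2.2.2.1 p.2.2.2.2.2

lemma entire_Dl8 (hψ : IsEntire6 ψ) : IsEntire6 (Dl8 ψ) := by
  rw [isEntire_iff, U6_Dl8 hψ]; exact pd_entire hψ _

lemma diff_slice_Dl8 (hψ : IsEntire6 ψ) (u1 u3 l4 l6 l8 l10 : ℂ) :
    Differentiable ℂ (fun t : ℂ => (fun t => ψ u1 u3 l4 l6 t l10 : ℂ → ℂ) t) := by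
  have e : (fun t : ℂ => (fun t => ψ u1 u3 l4 l6 t l10 : ℂ → ℂ) t)
      = (fun s : ℂ => U6 ψ (((u1, u3, l4, l6, 0, l10) : E6) + s • vel8)) := by
    funext s
    simp [U6, vel8, Prod.mk_add_mk, Prod.smul_mk, smul_eq_mul, mul_one, mul_zero, add_zero, zero_add]
  rw [e]
  exact fun t => (hasDerivAt_slice hψ _ vel8 t).differentiableAt

lemma Dl10_eq_pd (hψ : IsEntire6 ψ) (u1 u3 l4 l6 l8 l10 : ℂ) :
    Dl10 ψ u1 u3 l4 l6 l8 l10 = pd vel10 (U6 ψ) (u1, u3, l4, l6, l8, l10) := by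
  have h := deriv_slice hψ ((u1, u3, l4, l6, l8, 0) : E6) vel10 l10
  have e2 : ((u1, u3, l4, l6, l8, 0) : E6) + l10 • vel10 = ((u1, u3, l4, l6, l8, l10) : E6) := by
    simp [vel10, Prod.mk_add_mk, Prod.smul_mk, smul_eq_mul, mul_one, mul_zero, add_zero, zero_add]
  rw [e2] at h
  refine Eq.trans ?_ h
  show deriv (fun t => ψ u1 u3 l4 l6 l8 t) l10 = _
  congr 1
  funext s
  simp [U6, vel10, Prod.mk_add_mk, Prod.smul_mk, smul_eq_mul, mul_one, mul_zero, add_zero, zero_add]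

lemma U6_Dl10 (hψ : IsEntire6 ψ) : U6 (Dl10 ψ) = pd vel10 (U6 ψ) := by
  funext p
  exact Dl10_eq_pd hψ p.1 p.2.1 p.2.2.1 p.2.2.2.1 p.2.2.2.2.1 p.2.2.2.2.2

lemma entire_Dl10 (hψ : IsEntire6 ψ) : IsEntire6 (Dl10 ψ) := by
  rw [isEntire_iff, U6_Dl10 hψ]; exact pd_entire hψ _

lemma diff_slice_Dl10 (hψ : IsEntire6 ψ) (u1 u3 l4 l6 l8 l10 : ℂ) :
    Differentiable ℂ (fun t : ℂ => (fun t => ψ u1 u3 l4 l6 l8 t : ℂ → ℂ) t) := by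
  have e : (fun t : ℂ => (fun t => ψ u1 u3 l4 l6 l8 t : ℂ → ℂ) t)
      = (fun s : ℂ => U6 ψ (((u1, u3, l4, l6, l8, 0) : E6) + s • vel10)) := by
    funext s
    simp [U6, vel10, Prod.mk_add_mk, Prod.smul_mk, smul_eq_mul, mul_one, mul_zero, add_zero, zero_add]
  rw [e]
  exact fun t => (hasDerivAt_slice hψ _ vel10 t).differentiableAt

/-- Clairaut for the u-variables. -/
lemma Du1_Du3_comm (hψ : IsEntire6 ψ) (u1 u3 l4 l6 l8 l10 : ℂ) :
    Du1 (Du3 ψ) u1 u3 l4 l6 l8 l10 = Du3 (Du1 ψ) u1 u3 l4 l6 l8 l10 := by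
  rw [Du1_eq_pd (entire_Du3 hψ), Du3_eq_pd (entire_Du1 hψ), U6_Du3 hψ, U6_Du1 hψ]
  exact pd_comm hψ _ _ _

end SigmaUniq

namespace SigmaUniq
open Set

/-- One-variable entire functions -/
abbrev Ent1 (h : ℂ → ℂ) : Prop := AnalyticOnNhd ℂ h (univ : Set ℂ)

lemma Ent1.contDiff {h : ℂ → ℂ} (hh : Ent1 h) {n : ℕ∞} : ContDiff ℂ n h := by
  have := hh.contDiffOn (n := n) uniqueDiffOn_univ
  rw [contDiffOn_univ] at this
  exact this

lemma Ent1.differentiable {h : ℂ → ℂ} (hh : Ent1 h) : Differentiable ℂ h :=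
  fun x => (hh x (mem_univ x)).differentiableAt

lemma Ent1.derivE {h : ℂ → ℂ} (hh : Ent1 h) : Ent1 (_root_.deriv h) := by
  have h1 : Ent1 (pd (1 : ℂ) h) := pd_entire hh 1
  have e : _root_.deriv h = pd (1 : ℂ) h := by
    funext x
    show _root_.deriv h x = fderiv ℂ h x 1
    rw [fderiv_apply_one_eq_deriv]
  rw [e]; exact h1

lemma Ent1.mulE {f g : ℂ → ℂ} (hf : Ent1 f) (hg : Ent1 g) : Ent1 (fun s => f s * g s) :=
  AnalyticOnNhd.mul hf hg

lemma Ent1.smul1 {f : ℂ → ℂ} (hf : Ent1 f) : Ent1 (fun s => s * f s) :=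
  (analyticOnNhd_id (𝕜 := ℂ) (s := (univ : Set ℂ))).mul hf

lemma itd_add {f g : ℂ → ℂ} (hf : Ent1 f) (hg : Ent1 g) (N : ℕ) (x : ℂ) :
    iteratedDeriv N (fun s => f s + g s) x = iteratedDeriv N f x + iteratedDeriv N g x := by
  rw [← iteratedDerivWithin_univ, ← iteratedDerivWithin_univ, ← iteratedDerivWithin_univ]
  exact iteratedDerivWithin_add (mem_univ x) uniqueDiffOn_univ
    ((hf.contDiffOn (n := (N : WithTop ℕ∞)) uniqueDiffOn_univ).contDiffWithinAt (mem_univ x))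
    ((hg.contDiffOn (n := (N : WithTop ℕ∞)) uniqueDiffOn_univ).contDiffWithinAt (mem_univ x))

lemma itd_cmul (c : ℂ) {f : ℂ → ℂ} (hf : Ent1 f) (N : ℕ) (x : ℂ) :
    iteratedDeriv N (fun s => c * f s) x = c * iteratedDeriv N f x := by
  rw [← iteratedDerivWithin_univ, ← iteratedDerivWithin_univ]
  exact iteratedDerivWithin_const_mul (mem_univ x) uniqueDiffOn_univ c
    ((hf.contDiffOn (n := (N : WithTop ℕ∞)) uniqueDiffOn_univ).contDiffWithinAt (mem_univ x))

/-- iterated derivative of `s * h s` at `0`. -/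
lemma itd_smul1 {h : ℂ → ℂ} (hh : Ent1 h) (N : ℕ) :
    iteratedDeriv N (fun s => s * h s) 0 = (N : ℂ) * iteratedDeriv (N - 1) h 0 := by
  induction N generalizing h with
  | zero => simp
  | succ n ih =>
    rw [iteratedDeriv_succ']
    have hd : deriv (fun s => s * h s) = fun s => h s + s * deriv h s := by
      funext s
      have := ((hasDerivAt_id' s).mul (hh.differentiable s).hasDerivAt).deriv
      exact this.trans (by ring)
    rw [hd, itd_add hh (hh.derivE.smul1) n 0, ih hh.derivE]
    rcases Nat.eq_zero_or_pos n with h0 | hpos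
    · subst h0; simp
    · have e1 : iteratedDeriv n h 0 = iteratedDeriv (n - 1) (_root_.deriv h) 0 := by
        conv_lhs => rw [← Nat.succ_pred_eq_of_pos hpos]
        rw [iteratedDeriv_succ', Nat.pred_eq_sub_one]
      rw [Nat.add_sub_cancel, e1]
      push_cast
      ring

/-- iterated derivative of `s^k * h s` at `0`. -/
lemma itd_pow_mul {h : ℂ → ℂ} (hh : Ent1 h) (N k : ℕ) :
    iteratedDeriv N (fun s => s ^ k * h s) 0
      = (N.descFactorial k : ℂ) * iteratedDeriv (N - k) h 0 := by
  induction k generalizing h N with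
  | zero => simp
  | succ k ih =>
    have e : (fun s => s ^ (k + 1) * h s) = fun s => s ^ k * (s * h s) := by
      funext s; ring
    rw [e, ih hh.smul1, itd_smul1 hh, Nat.descFactorial_succ, Nat.cast_mul, ← Nat.sub_sub]
    ring

end SigmaUniq

namespace SigmaUniq
open Set

abbrev E7 : Type := ℂ × E6

/-- scaling map -/
def Sh : E7 → E6 := fun q =>
  (q.2.1, q.2.2.1, q.1 ^ 4 * q.2.2.2.1, q.1 ^ 6 * q.2.2.2.2.1,
    q.1 ^ 8 * q.2.2.2.2.2.1, q.1 ^ 10 * q.2.2.2.2.2.2)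

lemma Sh_entire : AnalyticOnNhd ℂ Sh (univ : Set E7) := by
  have h0 : AnalyticOnNhd ℂ (fun q : E7 => q.1) (univ : Set E7) := analyticOnNhd_fst
  have hs1 : AnalyticOnNhd ℂ (fun q : E7 => q.2) (univ : Set E7) := analyticOnNhd_snd
  have hu1 : AnalyticOnNhd ℂ (fun q : E7 => q.2.1) (univ : Set E7) :=
    analyticOnNhd_fst.comp hs1 (mapsTo_univ _ _)
  have hs2 : AnalyticOnNhd ℂ (fun q : E7 => q.2.2) (univ : Set E7) :=
    analyticOnNhd_snd.comp hs1 (mapsTo_univ _ _)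
  have hu3 : AnalyticOnNhd ℂ (fun q : E7 => q.2.2.1) (univ : Set E7) :=
    analyticOnNhd_fst.comp hs2 (mapsTo_univ _ _)
  have hs3 : AnalyticOnNhd ℂ (fun q : E7 => q.2.2.2) (univ : Set E7) :=
    analyticOnNhd_snd.comp hs2 (mapsTo_univ _ _)
  have hl4 : AnalyticOnNhd ℂ (fun q : E7 => q.2.2.2.1) (univ : Set E7) :=
    analyticOnNhd_fst.comp hs3 (mapsTo_univ _ _)
  have hs4 : AnalyticOnNhd ℂ (fun q : E7 => q.2.2.2.2) (univ : Set E7) :=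
    analyticOnNhd_snd.comp hs3 (mapsTo_univ _ _)
  have hl6 : AnalyticOnNhd ℂ (fun q : E7 => q.2.2.2.2.1) (univ : Set E7) :=
    analyticOnNhd_fst.comp hs4 (mapsTo_univ _ _)
  have hs5 : AnalyticOnNhd ℂ (fun q : E7 => q.2.2.2.2.2) (univ : Set E7) :=
    analyticOnNhd_snd.comp hs4 (mapsTo_univ _ _)
  have hl8 : AnalyticOnNhd ℂ (fun q : E7 => q.2.2.2.2.2.1) (univ : Set E7) :=
    analyticOnNhd_fst.comp hs5 (mapsTo_univ _ _)
  have hl10 : AnalyticOnNhd ℂ (fun q : E7 => q.2.2.2.2.2.2) (univ : Set E7) :=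
    analyticOnNhd_snd.comp hs5 (mapsTo_univ _ _)
  exact hu1.prod (hu3.prod ((((h0.pow 4).mul hl4).prod
    ((((h0.pow 6)).mul hl6).prod ((((h0.pow 8)).mul hl8).prod ((h0.pow 10).mul hl10))))))

/-- composed with the scaling -/
def W (χ : F6) : E7 → ℂ := fun q => U6 χ (Sh q)

variable {χ : F6}

lemma W_entire (hχ : IsEntire6 χ) : AnalyticOnNhd ℂ (W χ) (univ : Set E7) :=
  AnalyticOnNhd.comp (s := (univ : Set E7)) (t := (univ : Set E6)) hχ Sh_entire (mapsTo_univ _ _)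

def ves : E7 := (1, 0, 0, 0, 0, 0, 0)

/-- the weight-component extractor -/
def TN (N : ℕ) (χ : F6) : F6 := fun u1 u3 l4 l6 l8 l10 =>
  iteratedDeriv N
    (fun s => χ u1 u3 (s ^ 4 * l4) (s ^ 6 * l6) (s ^ 8 * l8) (s ^ 10 * l10)) 0

lemma slice1_entire (hχ : IsEntire6 χ) (u1 u3 l4 l6 l8 l10 : ℂ) :
    Ent1 (fun s => χ u1 u3 (s ^ 4 * l4) (s ^ 6 * l6) (s ^ 8 * l8) (s ^ 10 * l10)) := by
  have h := slice_entire (W_entire hχ) (((0 : ℂ), u1, u3, l4, l6, l8, l10) : E7) ves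
  have e : (fun s : ℂ => W χ ((((0 : ℂ), u1, u3, l4, l6, l8, l10) : E7) + s • ves))
      = fun s => χ u1 u3 (s ^ 4 * l4) (s ^ 6 * l6) (s ^ 8 * l8) (s ^ 10 * l10) := by
    funext s
    simp [W, U6, Sh, ves, Prod.mk_add_mk, Prod.smul_mk, smul_eq_mul, mul_one, mul_zero,
      add_zero, zero_add]
  rwa [e] at h

lemma TN_repr (hχ : IsEntire6 χ) (N : ℕ) (u1 u3 l4 l6 l8 l10 : ℂ) :
    TN N χ u1 u3 l4 l6 l8 l10
      = (pd ves)^[N] (W χ) ((0 : ℂ), u1, u3, l4, l6, l8, l10) := by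
  have h := iteratedDeriv_slice (W_entire hχ) (((0 : ℂ), u1, u3, l4, l6, l8, l10) : E7) ves N 0
  have e2 : (((0 : ℂ), u1, u3, l4, l6, l8, l10) : E7) + (0 : ℂ) • ves
      = (((0 : ℂ), u1, u3, l4, l6, l8, l10) : E7) := by simp
  rw [e2] at h
  refine Eq.trans ?_ h
  show iteratedDeriv N _ 0 = iteratedDeriv N _ 0
  congr 1
  funext s
  simp [W, U6, Sh, ves, Prod.mk_add_mk, Prod.smul_mk, smul_eq_mul, mul_one, mul_zero,
    add_zero, zero_add]

lemma TN_entire (hχ : IsEntire6 χ) (N : ℕ) : IsEntire6 (TN N χ) := by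
  rw [isEntire_iff]
  have e : U6 (TN N χ) = fun p : E6 => (pd ves)^[N] (W χ) ((0 : ℂ), p) := by
    funext p
    exact TN_repr hχ N p.1 p.2.1 p.2.2.1 p.2.2.2.1 p.2.2.2.2.1 p.2.2.2.2.2
  rw [e]
  have hR : AnalyticOnNhd ℂ ((pd ves)^[N] (W χ)) (univ : Set E7) :=
    pd_iter_entire (W_entire hχ) ves N
  have hemb : AnalyticOnNhd ℂ (fun p : E6 => (((0 : ℂ), p) : E7)) (univ : Set E6) :=
    analyticOnNhd_const.prod analyticOnNhd_id
  exact AnalyticOnNhd.comp (t := (univ : Set E7)) hR hemb (mapsTo_univ _ _)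

lemma TN_zero (hχ : IsEntire6 χ) (u1 u3 l4 l6 l8 l10 : ℂ) :
    TN 0 χ u1 u3 l4 l6 l8 l10 = χ u1 u3 0 0 0 0 := by
  have : (0 : ℂ) ^ 4 = 0 := by norm_num
  simp [TN, iteratedDeriv_zero]

end SigmaUniq

namespace SigmaUniq
open Set

variable {χ : F6}

lemma pd_W_Du1 (hχ : IsEntire6 χ) : pd (((0 : ℂ), veu1) : E7) (W χ) = W (Du1 χ) := by
  funext q
  obtain ⟨s0, u1, u3, l4, l6, l8, l10⟩ := q
  have h := deriv_slice (W_entire hχ) ((s0, u1, u3, l4, l6, l8, l10) : E7) (((0 : ℂ), veu1) : E7) 0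
  have e2 : ((s0, u1, u3, l4, l6, l8, l10) : E7) + (0 : ℂ) • (((0 : ℂ), veu1) : E7)
      = ((s0, u1, u3, l4, l6, l8, l10) : E7) := by simp
  rw [e2] at h
  rw [← h]
  have e1 : (fun s : ℂ => W χ (((s0, u1, u3, l4, l6, l8, l10) : E7) + s • (((0 : ℂ), veu1) : E7)))
      = fun s => (fun t => χ t u3 (s0 ^ 4 * l4) (s0 ^ 6 * l6) (s0 ^ 8 * l8) (s0 ^ 10 * l10)) (u1 + s) := by
    funext s
    simp [W, U6, Sh, veu1, Prod.mk_add_mk, Prod.smul_mk, smul_eq_mul, mul_one, mul_zero,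
      add_zero, zero_add]
  rw [e1]
  have hg : HasDerivAt (fun t => χ t u3 (s0 ^ 4 * l4) (s0 ^ 6 * l6) (s0 ^ 8 * l8) (s0 ^ 10 * l10))
      (Du1 χ u1 u3 (s0 ^ 4 * l4) (s0 ^ 6 * l6) (s0 ^ 8 * l8) (s0 ^ 10 * l10)) (u1 + 0) := by
    rw [add_zero]
    exact ((diff_slice_Du1 hχ u1 u3 (s0 ^ 4 * l4) (s0 ^ 6 * l6) (s0 ^ 8 * l8) (s0 ^ 10 * l10)) u1).hasDerivAt
  exact (hg.comp_const_add u1 0).deriv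

lemma pd_W_Du3 (hχ : IsEntire6 χ) : pd (((0 : ℂ), veu3) : E7) (W χ) = W (Du3 χ) := by
  funext q
  obtain ⟨s0, u1, u3, l4, l6, l8, l10⟩ := q
  have h := deriv_slice (W_entire hχ) ((s0, u1, u3, l4, l6, l8, l10) : E7) (((0 : ℂ), veu3) : E7) 0
  have e2 : ((s0, u1, u3, l4, l6, l8, l10) : E7) + (0 : ℂ) • (((0 : ℂ), veu3) : E7)
      = ((s0, u1, u3, l4, l6, l8, l10) : E7) := by simp
  rw [e2] at h
  rw [← h]
  have e1 : (fun s : ℂ => W χ (((s0, u1, u3, l4, l6, l8, l10) : E7) + s • (((0 : ℂ), veu3) : E7)))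
      = fun s => (fun t => χ u1 t (s0 ^ 4 * l4) (s0 ^ 6 * l6) (s0 ^ 8 * l8) (s0 ^ 10 * l10)) (u3 + s) := by
    funext s
    simp [W, U6, Sh, veu3, Prod.mk_add_mk, Prod.smul_mk, smul_eq_mul, mul_one, mul_zero,
      add_zero, zero_add]
  rw [e1]
  have hg : HasDerivAt (fun t => χ u1 t (s0 ^ 4 * l4) (s0 ^ 6 * l6) (s0 ^ 8 * l8) (s0 ^ 10 * l10))
      (Du3 χ u1 u3 (s0 ^ 4 * l4) (s0 ^ 6 * l6) (s0 ^ 8 * l8) (s0 ^ 10 * l10)) (u3 + 0) := by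
    rw [add_zero]
    exact ((diff_slice_Du3 hχ u1 u3 (s0 ^ 4 * l4) (s0 ^ 6 * l6) (s0 ^ 8 * l8) (s0 ^ 10 * l10)) u3).hasDerivAt
  exact (hg.comp_const_add u3 0).deriv

end SigmaUniq

namespace SigmaUniq
open Set

variable {χ : F6}

lemma pd_W_Dl4 (hχ : IsEntire6 χ) :
    pd (((0 : ℂ), vel4) : E7) (W χ) = fun q : E7 => q.1 ^ 4 * W (Dl4 χ) q := by
  funext q
  obtain ⟨s0, u1, u3, l4, l6, l8, l10⟩ := q
  have h := deriv_slice (W_entire hχ) ((s0, u1, u3, l4, l6, l8, l10) : E7) (((0 : ℂ), vel4) : E7) 0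
  have e2 : ((s0, u1, u3, l4, l6, l8, l10) : E7) + (0 : ℂ) • (((0 : ℂ), vel4) : E7)
      = ((s0, u1, u3, l4, l6, l8, l10) : E7) := by simp
  rw [e2] at h
  rw [← h]
  have e1 : (fun s : ℂ => W χ (((s0, u1, u3, l4, l6, l8, l10) : E7) + s • (((0 : ℂ), vel4) : E7)))
      = fun s : ℂ => χ u1 u3 (s0 ^ 4 * (l4 + s)) (s0 ^ 6 * l6) (s0 ^ 8 * l8) (s0 ^ 10 * l10) := by
    funext s
    simp only [W, U6, Sh, vel4, Prod.mk_add_mk, Prod.smul_mk, smul_eq_mul, mul_one, mul_zero,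
      add_zero, zero_add]
  rw [e1]
  have hf : HasDerivAt (fun s : ℂ => s0 ^ 4 * (l4 + s)) (s0 ^ 4 * 1) 0 :=
    ((hasDerivAt_id (0 : ℂ)).const_add l4).const_mul (s0 ^ 4)
  have hg : HasDerivAt (fun t => χ u1 u3 t (s0 ^ 6 * l6) (s0 ^ 8 * l8) (s0 ^ 10 * l10))
      (Dl4 χ u1 u3 (s0 ^ 4 * (l4 + 0)) (s0 ^ 6 * l6) (s0 ^ 8 * l8) (s0 ^ 10 * l10))
      (s0 ^ 4 * (l4 + 0)) :=
    (diff_slice_Dl4 hχ u1 u3 (s0 ^ 4 * l4) (s0 ^ 6 * l6) (s0 ^ 8 * l8) (s0 ^ 10 * l10)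
      (s0 ^ 4 * (l4 + 0))).hasDerivAt
  have := (hg.comp (0 : ℂ) hf).deriv
  rw [Function.comp_def] at this
  rw [this]
  show Dl4 χ u1 u3 (s0 ^ 4 * (l4 + 0)) (s0 ^ 6 * l6) (s0 ^ 8 * l8) (s0 ^ 10 * l10) * (s0 ^ 4 * 1) = _
  show _ = s0 ^ 4 * Dl4 χ u1 u3 (s0 ^ 4 * l4) (s0 ^ 6 * l6) (s0 ^ 8 * l8) (s0 ^ 10 * l10)
  rw [add_zero]
  ring

lemma pd_W_Dl6 (hχ : IsEntire6 χ) :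
    pd (((0 : ℂ), vel6) : E7) (W χ) = fun q : E7 => q.1 ^ 6 * W (Dl6 χ) q := by
  funext q
  obtain ⟨s0, u1, u3, l4, l6, l8, l10⟩ := q
  have h := deriv_slice (W_entire hχ) ((s0, u1, u3, l4, l6, l8, l10) : E7) (((0 : ℂ), vel6) : E7) 0
  have e2 : ((s0, u1, u3, l4, l6, l8, l10) : E7) + (0 : ℂ) • (((0 : ℂ), vel6) : E7)
      = ((s0, u1, u3, l4, l6, l8, l10) : E7) := by simp
  rw [e2] at h
  rw [← h]
  have e1 : (fun s : ℂ => W χ (((s0, u1, u3, l4, l6, l8, l10) : E7) + s • (((0 : ℂ), vel6) : E7)))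
      = fun s : ℂ => χ u1 u3 (s0 ^ 4 * l4) (s0 ^ 6 * (l6 + s)) (s0 ^ 8 * l8) (s0 ^ 10 * l10) := by
    funext s
    simp only [W, U6, Sh, vel6, Prod.mk_add_mk, Prod.smul_mk, smul_eq_mul, mul_one, mul_zero,
      add_zero, zero_add]
  rw [e1]
  have hf : HasDerivAt (fun s : ℂ => s0 ^ 6 * (l6 + s)) (s0 ^ 6 * 1) 0 :=
    ((hasDerivAt_id (0 : ℂ)).const_add l6).const_mul (s0 ^ 6)
  have hg : HasDerivAt (fun t => χ u1 u3 (s0 ^ 4 * l4) t (s0 ^ 8 * l8) (s0 ^ 10 * l10))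
      (Dl6 χ u1 u3 (s0 ^ 4 * l4) (s0 ^ 6 * (l6 + 0)) (s0 ^ 8 * l8) (s0 ^ 10 * l10))
      (s0 ^ 6 * (l6 + 0)) :=
    (diff_slice_Dl6 hχ u1 u3 (s0 ^ 4 * l4) (s0 ^ 6 * l6) (s0 ^ 8 * l8) (s0 ^ 10 * l10)
      (s0 ^ 6 * (l6 + 0))).hasDerivAt
  have := (hg.comp (0 : ℂ) hf).deriv
  rw [Function.comp_def] at this
  rw [this]
  show Dl6 χ u1 u3 (s0 ^ 4 * l4) (s0 ^ 6 * (l6 + 0)) (s0 ^ 8 * l8) (s0 ^ 10 * l10) * (s0 ^ 6 * 1) = _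
  show _ = s0 ^ 6 * Dl6 χ u1 u3 (s0 ^ 4 * l4) (s0 ^ 6 * l6) (s0 ^ 8 * l8) (s0 ^ 10 * l10)
  rw [add_zero]
  ring

lemma pd_W_Dl8 (hχ : IsEntire6 χ) :
    pd (((0 : ℂ), vel8) : E7) (W χ) = fun q : E7 => q.1 ^ 8 * W (Dl8 χ) q := by
  funext q
  obtain ⟨s0, u1, u3, l4, l6, l8, l10⟩ := q
  have h := deriv_slice (W_entire hχ) ((s0, u1, u3, l4, l6, l8, l10) : E7) (((0 : ℂ), vel8) : E7) 0
  have e2 : ((s0, u1, u3, l4, l6, l8, l10) : E7) + (0 : ℂ) • (((0 : ℂ), vel8) : E7)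
      = ((s0, u1, u3, l4, l6, l8, l10) : E7) := by simp
  rw [e2] at h
  rw [← h]
  have e1 : (fun s : ℂ => W χ (((s0, u1, u3, l4, l6, l8, l10) : E7) + s • (((0 : ℂ), vel8) : E7)))
      = fun s : ℂ => χ u1 u3 (s0 ^ 4 * l4) (s0 ^ 6 * l6) (s0 ^ 8 * (l8 + s)) (s0 ^ 10 * l10) := by
    funext s
    simp only [W, U6, Sh, vel8, Prod.mk_add_mk, Prod.smul_mk, smul_eq_mul, mul_one, mul_zero,
      add_zero, zero_add]
  rw [e1]
  have hf : HasDerivAt (fun s : ℂ => s0 ^ 8 * (l8 + s)) (s0 ^ 8 * 1) 0 :=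
    ((hasDerivAt_id (0 : ℂ)).const_add l8).const_mul (s0 ^ 8)
  have hg : HasDerivAt (fun t => χ u1 u3 (s0 ^ 4 * l4) (s0 ^ 6 * l6) t (s0 ^ 10 * l10))
      (Dl8 χ u1 u3 (s0 ^ 4 * l4) (s0 ^ 6 * l6) (s0 ^ 8 * (l8 + 0)) (s0 ^ 10 * l10))
      (s0 ^ 8 * (l8 + 0)) :=
    (diff_slice_Dl8 hχ u1 u3 (s0 ^ 4 * l4) (s0 ^ 6 * l6) (s0 ^ 8 * l8) (s0 ^ 10 * l10)
      (s0 ^ 8 * (l8 + 0))).hasDerivAt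
  have := (hg.comp (0 : ℂ) hf).deriv
  rw [Function.comp_def] at this
  rw [this]
  show Dl8 χ u1 u3 (s0 ^ 4 * l4) (s0 ^ 6 * l6) (s0 ^ 8 * (l8 + 0)) (s0 ^ 10 * l10) * (s0 ^ 8 * 1) = _
  show _ = s0 ^ 8 * Dl8 χ u1 u3 (s0 ^ 4 * l4) (s0 ^ 6 * l6) (s0 ^ 8 * l8) (s0 ^ 10 * l10)
  rw [add_zero]
  ring

lemma pd_W_Dl10 (hχ : IsEntire6 χ) :
    pd (((0 : ℂ), vel10) : E7) (W χ) = fun q : E7 => q.1 ^ 10 * W (Dl10 χ) q := by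
  funext q
  obtain ⟨s0, u1, u3, l4, l6, l8, l10⟩ := q
  have h := deriv_slice (W_entire hχ) ((s0, u1, u3, l4, l6, l8, l10) : E7) (((0 : ℂ), vel10) : E7) 0
  have e2 : ((s0, u1, u3, l4, l6, l8, l10) : E7) + (0 : ℂ) • (((0 : ℂ), vel10) : E7)
      = ((s0, u1, u3, l4, l6, l8, l10) : E7) := by simp
  rw [e2] at h
  rw [← h]
  have e1 : (fun s : ℂ => W χ (((s0, u1, u3, l4, l6, l8, l10) : E7) + s • (((0 : ℂ), vel10) : E7)))
      = fun s : ℂ => χ u1 u3 (s0 ^ 4 * l4) (s0 ^ 6 * l6) (s0 ^ 8 * l8) (s0 ^ 10 * (l10 + s)) := by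
    funext s
    simp only [W, U6, Sh, vel10, Prod.mk_add_mk, Prod.smul_mk, smul_eq_mul, mul_one, mul_zero,
      add_zero, zero_add]
  rw [e1]
  have hf : HasDerivAt (fun s : ℂ => s0 ^ 10 * (l10 + s)) (s0 ^ 10 * 1) 0 :=
    ((hasDerivAt_id (0 : ℂ)).const_add l10).const_mul (s0 ^ 10)
  have hg : HasDerivAt (fun t => χ u1 u3 (s0 ^ 4 * l4) (s0 ^ 6 * l6) (s0 ^ 8 * l8) t)
      (Dl10 χ u1 u3 (s0 ^ 4 * l4) (s0 ^ 6 * l6) (s0 ^ 8 * l8) (s0 ^ 10 * (l10 + 0)))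
      (s0 ^ 10 * (l10 + 0)) :=
    (diff_slice_Dl10 hχ u1 u3 (s0 ^ 4 * l4) (s0 ^ 6 * l6) (s0 ^ 8 * l8) (s0 ^ 10 * l10)
      (s0 ^ 10 * (l10 + 0))).hasDerivAt
  have := (hg.comp (0 : ℂ) hf).deriv
  rw [Function.comp_def] at this
  rw [this]
  show Dl10 χ u1 u3 (s0 ^ 4 * l4) (s0 ^ 6 * l6) (s0 ^ 8 * l8) (s0 ^ 10 * (l10 + 0)) * (s0 ^ 10 * 1) = _
  show _ = s0 ^ 10 * Dl10 χ u1 u3 (s0 ^ 4 * l4) (s0 ^ 6 * l6) (s0 ^ 8 * l8) (s0 ^ 10 * l10)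
  rw [add_zero]
  ring

end SigmaUniq

namespace SigmaUniq
open Set

variable {χ : F6}


lemma TN_Du1 (hχ : IsEntire6 χ) (N : ℕ) (u1 u3 l4 l6 l8 l10 : ℂ) :
    Du1 (TN N χ) u1 u3 l4 l6 l8 l10 = TN N (Du1 χ) u1 u3 l4 l6 l8 l10 := by

  have hR : AnalyticOnNhd ℂ ((pd ves)^[N] (W χ)) (univ : Set E7) :=
    pd_iter_entire (W_entire hχ) ves N
  show deriv _ _ = _
  have e0 : (fun t => TN N χ t u3 l4 l6 l8 l10)
      = fun t => (pd ves)^[N] (W χ)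
          ((((0 : ℂ), 0, u3, l4, l6, l8, l10) : E7) + t • (((0 : ℂ), veu1) : E7)) := by
    funext t
    rw [TN_repr hχ N t u3 l4 l6 l8 l10]
    congr 1
    simp [veu1, veu3, vel4, vel6, vel8, vel10, ves, Prod.mk_add_mk, Prod.smul_mk, smul_eq_mul, mul_one, mul_zero, add_zero, zero_add]
  rw [e0, deriv_slice hR _ _ u1]
  have e2 : (((0 : ℂ), 0, u3, l4, l6, l8, l10) : E7) + u1 • (((0 : ℂ), veu1) : E7)
      = (((0 : ℂ), u1, u3, l4, l6, l8, l10) : E7) := by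
    simp [veu1, veu3, vel4, vel6, vel8, vel10, ves, Prod.mk_add_mk, Prod.smul_mk, smul_eq_mul, mul_one, mul_zero, add_zero, zero_add]
  rw [e2, ← pd_iter_comm (W_entire hχ) ves (((0 : ℂ), veu1) : E7) N, pd_W_Du1 hχ]

  exact (TN_repr (entire_Du1 hχ) N u1 u3 l4 l6 l8 l10).symm

lemma TN_Du3 (hχ : IsEntire6 χ) (N : ℕ) (u1 u3 l4 l6 l8 l10 : ℂ) :
    Du3 (TN N χ) u1 u3 l4 l6 l8 l10 = TN N (Du3 χ) u1 u3 l4 l6 l8 l10 := by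

  have hR : AnalyticOnNhd ℂ ((pd ves)^[N] (W χ)) (univ : Set E7) :=
    pd_iter_entire (W_entire hχ) ves N
  show deriv _ _ = _
  have e0 : (fun t => TN N χ u1 t l4 l6 l8 l10)
      = fun t => (pd ves)^[N] (W χ)
          ((((0 : ℂ), u1, 0, l4, l6, l8, l10) : E7) + t • (((0 : ℂ), veu3) : E7)) := by
    funext t
    rw [TN_repr hχ N u1 t l4 l6 l8 l10]
    congr 1
    simp [veu1, veu3, vel4, vel6, vel8, vel10, ves, Prod.mk_add_mk, Prod.smul_mk, smul_eq_mul, mul_one, mul_zero, add_zero, zero_add]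
  rw [e0, deriv_slice hR _ _ u3]
  have e2 : (((0 : ℂ), u1, 0, l4, l6, l8, l10) : E7) + u3 • (((0 : ℂ), veu3) : E7)
      = (((0 : ℂ), u1, u3, l4, l6, l8, l10) : E7) := by
    simp [veu1, veu3, vel4, vel6, vel8, vel10, ves, Prod.mk_add_mk, Prod.smul_mk, smul_eq_mul, mul_one, mul_zero, add_zero, zero_add]
  rw [e2, ← pd_iter_comm (W_entire hχ) ves (((0 : ℂ), veu3) : E7) N, pd_W_Du3 hχ]

  exact (TN_repr (entire_Du3 hχ) N u1 u3 l4 l6 l8 l10).symm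

lemma TN_Dl4 (hχ : IsEntire6 χ) (N : ℕ) (u1 u3 l4 l6 l8 l10 : ℂ) :
    Dl4 (TN N χ) u1 u3 l4 l6 l8 l10
      = (N.descFactorial 4 : ℂ) * TN (N - 4) (Dl4 χ) u1 u3 l4 l6 l8 l10 := by

  have hR : AnalyticOnNhd ℂ ((pd ves)^[N] (W χ)) (univ : Set E7) :=
    pd_iter_entire (W_entire hχ) ves N
  show deriv _ _ = _
  have e0 : (fun t => TN N χ u1 u3 t l6 l8 l10)
      = fun t => (pd ves)^[N] (W χ)
          ((((0 : ℂ), u1, u3, 0, l6, l8, l10) : E7) + t • (((0 : ℂ), vel4) : E7)) := by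
    funext t
    rw [TN_repr hχ N u1 u3 t l6 l8 l10]
    congr 1
    simp [veu1, veu3, vel4, vel6, vel8, vel10, ves, Prod.mk_add_mk, Prod.smul_mk, smul_eq_mul, mul_one, mul_zero, add_zero, zero_add]
  rw [e0, deriv_slice hR _ _ l4]
  have e2 : (((0 : ℂ), u1, u3, 0, l6, l8, l10) : E7) + l4 • (((0 : ℂ), vel4) : E7)
      = (((0 : ℂ), u1, u3, l4, l6, l8, l10) : E7) := by
    simp [veu1, veu3, vel4, vel6, vel8, vel10, ves, Prod.mk_add_mk, Prod.smul_mk, smul_eq_mul, mul_one, mul_zero, add_zero, zero_add]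
  rw [e2, ← pd_iter_comm (W_entire hχ) ves (((0 : ℂ), vel4) : E7) N, pd_W_Dl4 hχ]

  have hF : AnalyticOnNhd ℂ (fun q : E7 => q.1 ^ 4 * W (Dl4 χ) q) (univ : Set E7) :=
    (analyticOnNhd_fst.pow 4).mul (W_entire (entire_Dl4 hχ))
  have h := iteratedDeriv_slice hF (((0 : ℂ), u1, u3, l4, l6, l8, l10) : E7) ves N 0
  have e4 : (((0 : ℂ), u1, u3, l4, l6, l8, l10) : E7) + (0 : ℂ) • ves
      = (((0 : ℂ), u1, u3, l4, l6, l8, l10) : E7) := by simp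
  rw [e4] at h
  rw [← h]
  have e3 : (fun s : ℂ => (fun q : E7 => q.1 ^ 4 * W (Dl4 χ) q)
        ((((0 : ℂ), u1, u3, l4, l6, l8, l10) : E7) + s • ves))
      = fun s : ℂ => s ^ 4 *
          (fun s' : ℂ => Dl4 χ u1 u3 (s' ^ 4 * l4) (s' ^ 6 * l6) (s' ^ 8 * l8) (s' ^ 10 * l10)) s := by
    funext s
    simp [W, U6, Sh, veu1, veu3, vel4, vel6, vel8, vel10, ves, Prod.mk_add_mk, Prod.smul_mk, smul_eq_mul, mul_one, mul_zero, add_zero, zero_add]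
  rw [e3, itd_pow_mul (slice1_entire (entire_Dl4 hχ) u1 u3 l4 l6 l8 l10) N 4]
  rfl

lemma TN_Dl6 (hχ : IsEntire6 χ) (N : ℕ) (u1 u3 l4 l6 l8 l10 : ℂ) :
    Dl6 (TN N χ) u1 u3 l4 l6 l8 l10
      = (N.descFactorial 6 : ℂ) * TN (N - 6) (Dl6 χ) u1 u3 l4 l6 l8 l10 := by

  have hR : AnalyticOnNhd ℂ ((pd ves)^[N] (W χ)) (univ : Set E7) :=
    pd_iter_entire (W_entire hχ) ves N
  show deriv _ _ = _
  have e0 : (fun t => TN N χ u1 u3 l4 t l8 l10)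
      = fun t => (pd ves)^[N] (W χ)
          ((((0 : ℂ), u1, u3, l4, 0, l8, l10) : E7) + t • (((0 : ℂ), vel6) : E7)) := by
    funext t
    rw [TN_repr hχ N u1 u3 l4 t l8 l10]
    congr 1
    simp [veu1, veu3, vel4, vel6, vel8, vel10, ves, Prod.mk_add_mk, Prod.smul_mk, smul_eq_mul, mul_one, mul_zero, add_zero, zero_add]
  rw [e0, deriv_slice hR _ _ l6]
  have e2 : (((0 : ℂ), u1, u3, l4, 0, l8, l10) : E7) + l6 • (((0 : ℂ), vel6) : E7)
      = (((0 : ℂ), u1, u3, l4, l6, l8, l10) : E7) := by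
    simp [veu1, veu3, vel4, vel6, vel8, vel10, ves, Prod.mk_add_mk, Prod.smul_mk, smul_eq_mul, mul_one, mul_zero, add_zero, zero_add]
  rw [e2, ← pd_iter_comm (W_entire hχ) ves (((0 : ℂ), vel6) : E7) N, pd_W_Dl6 hχ]

  have hF : AnalyticOnNhd ℂ (fun q : E7 => q.1 ^ 6 * W (Dl6 χ) q) (univ : Set E7) :=
    (analyticOnNhd_fst.pow 6).mul (W_entire (entire_Dl6 hχ))
  have h := iteratedDeriv_slice hF (((0 : ℂ), u1, u3, l4, l6, l8, l10) : E7) ves N 0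
  have e4 : (((0 : ℂ), u1, u3, l4, l6, l8, l10) : E7) + (0 : ℂ) • ves
      = (((0 : ℂ), u1, u3, l4, l6, l8, l10) : E7) := by simp
  rw [e4] at h
  rw [← h]
  have e3 : (fun s : ℂ => (fun q : E7 => q.1 ^ 6 * W (Dl6 χ) q)
        ((((0 : ℂ), u1, u3, l4, l6, l8, l10) : E7) + s • ves))
      = fun s : ℂ => s ^ 6 *
          (fun s' : ℂ => Dl6 χ u1 u3 (s' ^ 4 * l4) (s' ^ 6 * l6) (s' ^ 8 * l8) (s' ^ 10 * l10)) s := by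
    funext s
    simp [W, U6, Sh, veu1, veu3, vel4, vel6, vel8, vel10, ves, Prod.mk_add_mk, Prod.smul_mk, smul_eq_mul, mul_one, mul_zero, add_zero, zero_add]
  rw [e3, itd_pow_mul (slice1_entire (entire_Dl6 hχ) u1 u3 l4 l6 l8 l10) N 6]
  rfl

lemma TN_Dl8 (hχ : IsEntire6 χ) (N : ℕ) (u1 u3 l4 l6 l8 l10 : ℂ) :
    Dl8 (TN N χ) u1 u3 l4 l6 l8 l10
      = (N.descFactorial 8 : ℂ) * TN (N - 8) (Dl8 χ) u1 u3 l4 l6 l8 l10 := by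

  have hR : AnalyticOnNhd ℂ ((pd ves)^[N] (W χ)) (univ : Set E7) :=
    pd_iter_entire (W_entire hχ) ves N
  show deriv _ _ = _
  have e0 : (fun t => TN N χ u1 u3 l4 l6 t l10)
      = fun t => (pd ves)^[N] (W χ)
          ((((0 : ℂ), u1, u3, l4, l6, 0, l10) : E7) + t • (((0 : ℂ), vel8) : E7)) := by
    funext t
    rw [TN_repr hχ N u1 u3 l4 l6 t l10]
    congr 1
    simp [veu1, veu3, vel4, vel6, vel8, vel10, ves, Prod.mk_add_mk, Prod.smul_mk, smul_eq_mul, mul_one, mul_zero, add_zero, zero_add]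
  rw [e0, deriv_slice hR _ _ l8]
  have e2 : (((0 : ℂ), u1, u3, l4, l6, 0, l10) : E7) + l8 • (((0 : ℂ), vel8) : E7)
      = (((0 : ℂ), u1, u3, l4, l6, l8, l10) : E7) := by
    simp [veu1, veu3, vel4, vel6, vel8, vel10, ves, Prod.mk_add_mk, Prod.smul_mk, smul_eq_mul, mul_one, mul_zero, add_zero, zero_add]
  rw [e2, ← pd_iter_comm (W_entire hχ) ves (((0 : ℂ), vel8) : E7) N, pd_W_Dl8 hχ]

  have hF : AnalyticOnNhd ℂ (fun q : E7 => q.1 ^ 8 * W (Dl8 χ) q) (univ : Set E7) :=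
    (analyticOnNhd_fst.pow 8).mul (W_entire (entire_Dl8 hχ))
  have h := iteratedDeriv_slice hF (((0 : ℂ), u1, u3, l4, l6, l8, l10) : E7) ves N 0
  have e4 : (((0 : ℂ), u1, u3, l4, l6, l8, l10) : E7) + (0 : ℂ) • ves
      = (((0 : ℂ), u1, u3, l4, l6, l8, l10) : E7) := by simp
  rw [e4] at h
  rw [← h]
  have e3 : (fun s : ℂ => (fun q : E7 => q.1 ^ 8 * W (Dl8 χ) q)
        ((((0 : ℂ), u1, u3, l4, l6, l8, l10) : E7) + s • ves))
      = fun s : ℂ => s ^ 8 *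
          (fun s' : ℂ => Dl8 χ u1 u3 (s' ^ 4 * l4) (s' ^ 6 * l6) (s' ^ 8 * l8) (s' ^ 10 * l10)) s := by
    funext s
    simp [W, U6, Sh, veu1, veu3, vel4, vel6, vel8, vel10, ves, Prod.mk_add_mk, Prod.smul_mk, smul_eq_mul, mul_one, mul_zero, add_zero, zero_add]
  rw [e3, itd_pow_mul (slice1_entire (entire_Dl8 hχ) u1 u3 l4 l6 l8 l10) N 8]
  rfl

lemma TN_Dl10 (hχ : IsEntire6 χ) (N : ℕ) (u1 u3 l4 l6 l8 l10 : ℂ) :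
    Dl10 (TN N χ) u1 u3 l4 l6 l8 l10
      = (N.descFactorial 10 : ℂ) * TN (N - 10) (Dl10 χ) u1 u3 l4 l6 l8 l10 := by

  have hR : AnalyticOnNhd ℂ ((pd ves)^[N] (W χ)) (univ : Set E7) :=
    pd_iter_entire (W_entire hχ) ves N
  show deriv _ _ = _
  have e0 : (fun t => TN N χ u1 u3 l4 l6 l8 t)
      = fun t => (pd ves)^[N] (W χ)
          ((((0 : ℂ), u1, u3, l4, l6, l8, 0) : E7) + t • (((0 : ℂ), vel10) : E7)) := by
    funext t
    rw [TN_repr hχ N u1 u3 l4 l6 l8 t]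
    congr 1
    simp [veu1, veu3, vel4, vel6, vel8, vel10, ves, Prod.mk_add_mk, Prod.smul_mk, smul_eq_mul, mul_one, mul_zero, add_zero, zero_add]
  rw [e0, deriv_slice hR _ _ l10]
  have e2 : (((0 : ℂ), u1, u3, l4, l6, l8, 0) : E7) + l10 • (((0 : ℂ), vel10) : E7)
      = (((0 : ℂ), u1, u3, l4, l6, l8, l10) : E7) := by
    simp [veu1, veu3, vel4, vel6, vel8, vel10, ves, Prod.mk_add_mk, Prod.smul_mk, smul_eq_mul, mul_one, mul_zero, add_zero, zero_add]
  rw [e2, ← pd_iter_comm (W_entire hχ) ves (((0 : ℂ), vel10) : E7) N, pd_W_Dl10 hχ]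

  have hF : AnalyticOnNhd ℂ (fun q : E7 => q.1 ^ 10 * W (Dl10 χ) q) (univ : Set E7) :=
    (analyticOnNhd_fst.pow 10).mul (W_entire (entire_Dl10 hχ))
  have h := iteratedDeriv_slice hF (((0 : ℂ), u1, u3, l4, l6, l8, l10) : E7) ves N 0
  have e4 : (((0 : ℂ), u1, u3, l4, l6, l8, l10) : E7) + (0 : ℂ) • ves
      = (((0 : ℂ), u1, u3, l4, l6, l8, l10) : E7) := by simp
  rw [e4] at h
  rw [← h]
  have e3 : (fun s : ℂ => (fun q : E7 => q.1 ^ 10 * W (Dl10 χ) q)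
        ((((0 : ℂ), u1, u3, l4, l6, l8, l10) : E7) + s • ves))
      = fun s : ℂ => s ^ 10 *
          (fun s' : ℂ => Dl10 χ u1 u3 (s' ^ 4 * l4) (s' ^ 6 * l6) (s' ^ 8 * l8) (s' ^ 10 * l10)) s := by
    funext s
    simp [W, U6, Sh, veu1, veu3, vel4, vel6, vel8, vel10, ves, Prod.mk_add_mk, Prod.smul_mk, smul_eq_mul, mul_one, mul_zero, add_zero, zero_add]
  rw [e3, itd_pow_mul (slice1_entire (entire_Dl10 hχ) u1 u3 l4 l6 l8 l10) N 10]
  rfl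

end SigmaUniq

namespace SigmaUniq
open Set

variable {χ : F6}

lemma hasDerivAt_scaleslice (hχ : IsEntire6 χ) (u1 u3 l4 l6 l8 l10 s : ℂ) :
    HasDerivAt (fun r => χ u1 u3 (r ^ 4 * l4) (r ^ 6 * l6) (r ^ 8 * l8) (r ^ 10 * l10))
      (4 * s ^ 3 * l4 * Dl4 χ u1 u3 (s ^ 4 * l4) (s ^ 6 * l6) (s ^ 8 * l8) (s ^ 10 * l10)
        + 6 * s ^ 5 * l6 * Dl6 χ u1 u3 (s ^ 4 * l4) (s ^ 6 * l6) (s ^ 8 * l8) (s ^ 10 * l10)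
        + 8 * s ^ 7 * l8 * Dl8 χ u1 u3 (s ^ 4 * l4) (s ^ 6 * l6) (s ^ 8 * l8) (s ^ 10 * l10)
        + 10 * s ^ 9 * l10 * Dl10 χ u1 u3 (s ^ 4 * l4) (s ^ 6 * l6) (s ^ 8 * l8) (s ^ 10 * l10)) s := by
  have h4 : HasDerivAt (fun r : ℂ => r ^ 4 * l4) (((4 : ℕ) : ℂ) * s ^ 3 * l4) s :=
    (hasDerivAt_pow 4 s).mul_const l4
  have h6 : HasDerivAt (fun r : ℂ => r ^ 6 * l6) (((6 : ℕ) : ℂ) * s ^ 5 * l6) s :=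
    (hasDerivAt_pow 6 s).mul_const l6
  have h8 : HasDerivAt (fun r : ℂ => r ^ 8 * l8) (((8 : ℕ) : ℂ) * s ^ 7 * l8) s :=
    (hasDerivAt_pow 8 s).mul_const l8
  have h10 : HasDerivAt (fun r : ℂ => r ^ 10 * l10) (((10 : ℕ) : ℂ) * s ^ 9 * l10) s :=
    (hasDerivAt_pow 10 s).mul_const l10
  have hγ : HasDerivAt (fun r : ℂ => ((u1, u3, r ^ 4 * l4, r ^ 6 * l6, r ^ 8 * l8, r ^ 10 * l10) : E6))
      ((0, 0, ((4 : ℕ) : ℂ) * s ^ 3 * l4, ((6 : ℕ) : ℂ) * s ^ 5 * l6,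
        ((8 : ℕ) : ℂ) * s ^ 7 * l8, ((10 : ℕ) : ℂ) * s ^ 9 * l10) : E6) s :=
    HasDerivAt.prodMk (hasDerivAt_const s u1) (HasDerivAt.prodMk (hasDerivAt_const s u3)
      (h4.prodMk (h6.prodMk (h8.prodMk h10))))
  have hFd : HasFDerivAt (U6 χ)
      (fderiv ℂ (U6 χ) ((u1, u3, s ^ 4 * l4, s ^ 6 * l6, s ^ 8 * l8, s ^ 10 * l10) : E6))
      ((u1, u3, s ^ 4 * l4, s ^ 6 * l6, s ^ 8 * l8, s ^ 10 * l10) : E6) :=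
    ((hχ _ (mem_univ _)).differentiableAt).hasFDerivAt
  have hcomp := hFd.comp_hasDerivAt s hγ
  have evec : ((0, 0, ((4 : ℕ) : ℂ) * s ^ 3 * l4, ((6 : ℕ) : ℂ) * s ^ 5 * l6,
        ((8 : ℕ) : ℂ) * s ^ 7 * l8, ((10 : ℕ) : ℂ) * s ^ 9 * l10) : E6)
      = (((4 : ℕ) : ℂ) * s ^ 3 * l4) • vel4 + (((6 : ℕ) : ℂ) * s ^ 5 * l6) • vel6
        + (((8 : ℕ) : ℂ) * s ^ 7 * l8) • vel8 + (((10 : ℕ) : ℂ) * s ^ 9 * l10) • vel10 := by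
    simp [vel4, vel6, vel8, vel10, Prod.mk_add_mk, Prod.smul_mk, smul_eq_mul, mul_one, mul_zero,
      add_zero, zero_add]
  rw [evec] at hcomp
  simp only [ContinuousLinearMap.map_add, ContinuousLinearMap.map_smul, smul_eq_mul] at hcomp
  have p4 := (Dl4_eq_pd hχ u1 u3 (s ^ 4 * l4) (s ^ 6 * l6) (s ^ 8 * l8) (s ^ 10 * l10)).symm
  have p6 := (Dl6_eq_pd hχ u1 u3 (s ^ 4 * l4) (s ^ 6 * l6) (s ^ 8 * l8) (s ^ 10 * l10)).symm
  have p8 := (Dl8_eq_pd hχ u1 u3 (s ^ 4 * l4) (s ^ 6 * l6) (s ^ 8 * l8) (s ^ 10 * l10)).symm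
  have p10 := (Dl10_eq_pd hχ u1 u3 (s ^ 4 * l4) (s ^ 6 * l6) (s ^ 8 * l8) (s ^ 10 * l10)).symm
  rw [pd] at p4 p6 p8 p10
  exact hcomp.congr_deriv (by
    rw [← p4, ← p6, ← p8, ← p10]
    push_cast
    ring)

end SigmaUniq

namespace SigmaUniq
open Set

/-- Endgame: a quasi-homogeneous entire solution of the truncated system vanishes. -/
lemma endgame (c : F6) (hc : IsEntire6 c) (m : ℂ) (hm0 : m ≠ 0) (hm1 : m ≠ 1) (hm3 : m ≠ 3)
    (h0 : ∀ u1 u3 l4 l6 l8 l10 : ℂ,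
      u1 * Du1 c u1 u3 l4 l6 l8 l10 + 3 * u3 * Du3 c u1 u3 l4 l6 l8 l10
        = m * c u1 u3 l4 l6 l8 l10)
    (h2 : ∀ u1 u3 l4 l6 l8 l10 : ℂ,
      (1 / 2) * Du1 (Du1 c) u1 u3 l4 l6 l8 l10 + u1 * Du3 c u1 u3 l4 l6 l8 l10 = 0)
    (h4 : ∀ u1 u3 l4 l6 l8 l10 : ℂ, Du1 (Du3 c) u1 u3 l4 l6 l8 l10 = 0)
    (h6 : ∀ u1 u3 l4 l6 l8 l10 : ℂ, Du3 (Du3 c) u1 u3 l4 l6 l8 l10 = 0)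
    (u1 u3 l4 l6 l8 l10 : ℂ) : c u1 u3 l4 l6 l8 l10 = 0 := by
  have hB : ∀ x y : ℂ, Du3 c x y l4 l6 l8 l10 = Du3 c 0 0 l4 l6 l8 l10 := by
    intro x y
    have c1 : Du3 c x y l4 l6 l8 l10 = Du3 c x 0 l4 l6 l8 l10 :=
      is_const_of_deriv_eq_zero (diff_slice_Du3 (entire_Du3 hc) x 0 l4 l6 l8 l10)
        (fun t => h6 x t l4 l6 l8 l10) y 0
    have c2 : Du3 c x 0 l4 l6 l8 l10 = Du3 c 0 0 l4 l6 l8 l10 :=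
      is_const_of_deriv_eq_zero (diff_slice_Du1 (entire_Du3 hc) 0 0 l4 l6 l8 l10)
        (fun t => h4 t 0 l4 l6 l8 l10) x 0
    exact c1.trans c2
  set b : ℂ := Du3 c 0 0 l4 l6 l8 l10 with hbdef
  set a : ℂ := Du1 c 0 0 l4 l6 l8 l10 with hadef
  set c0 : ℂ := c 0 0 l4 l6 l8 l10 with hc0def
  have hA : ∀ x y : ℂ, Du1 c x y l4 l6 l8 l10 = a - b * x ^ 2 := by
    intro x y
    have hconst : ∀ t : ℂ, deriv (fun r : ℂ => Du1 c r y l4 l6 l8 l10 + b * r ^ 2) t = 0 := by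
      intro t
      have hd1 : HasDerivAt (fun r : ℂ => Du1 c r y l4 l6 l8 l10)
          (Du1 (Du1 c) t y l4 l6 l8 l10) t :=
        ((diff_slice_Du1 (entire_Du1 hc) 0 y l4 l6 l8 l10) t).hasDerivAt
      have hd2 : HasDerivAt (fun r : ℂ => b * r ^ 2) (b * (2 * t)) t := by
        have := (hasDerivAt_pow 2 t).const_mul b
        exact this.congr_deriv (by push_cast; ring)
      rw [deriv_fun_add hd1.differentiableAt hd2.differentiableAt, hd1.deriv, hd2.deriv]
      have e2 := h2 t y l4 l6 l8 l10
      rw [hB t y] at e2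
      linear_combination 2 * e2
    have hdiff : Differentiable ℂ (fun r : ℂ => Du1 c r y l4 l6 l8 l10 + b * r ^ 2) := by
      intro t
      exact ((diff_slice_Du1 (entire_Du1 hc) 0 y l4 l6 l8 l10) t).add (by fun_prop)
    have h1 := is_const_of_deriv_eq_zero hdiff hconst x 0
    have h2' : Du1 c 0 y l4 l6 l8 l10 = a := by
      refine is_const_of_deriv_eq_zero (diff_slice_Du3 (entire_Du1 hc) 0 0 l4 l6 l8 l10)
        (fun t => ?_) y 0
      show Du3 (Du1 c) 0 t l4 l6 l8 l10 = 0
      rw [← Du1_Du3_comm hc 0 t l4 l6 l8 l10]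
      exact h4 0 t l4 l6 l8 l10
    rw [h2'] at h1
    linear_combination h1
  have hF : ∀ x y : ℂ, c x y l4 l6 l8 l10 = c0 + b * y + a * x - b * x ^ 3 / 3 := by
    intro x y
    have hconst : ∀ t : ℂ, deriv (fun r : ℂ => c r y l4 l6 l8 l10 - (a * r - b * r ^ 3 / 3)) t = 0 := by
      intro t
      have hd1 : HasDerivAt (fun r : ℂ => c r y l4 l6 l8 l10) (Du1 c t y l4 l6 l8 l10) t :=
        ((diff_slice_Du1 hc 0 y l4 l6 l8 l10) t).hasDerivAt
      have hd2 : HasDerivAt (fun r : ℂ => a * r - b * r ^ 3 / 3) (a - b * t ^ 2) t := by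
        have := (((hasDerivAt_id t).const_mul a).sub
          (((hasDerivAt_pow 3 t).const_mul b).div_const 3))
        exact this.congr_deriv (by push_cast; ring)
      rw [deriv_fun_sub hd1.differentiableAt hd2.differentiableAt, hd1.deriv, hd2.deriv, hA t y]
      ring
    have hdiff : Differentiable ℂ (fun r : ℂ => c r y l4 l6 l8 l10 - (a * r - b * r ^ 3 / 3)) := by
      intro t
      exact ((diff_slice_Du1 hc 0 y l4 l6 l8 l10) t).sub (by fun_prop)
    have h1 := is_const_of_deriv_eq_zero hdiff hconst x 0
    have h2' : c 0 y l4 l6 l8 l10 = c0 + b * y := by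
      have hconst2 : ∀ t : ℂ, deriv (fun r : ℂ => c 0 r l4 l6 l8 l10 - b * r) t = 0 := by
        intro t
        have hd1 : HasDerivAt (fun r : ℂ => c 0 r l4 l6 l8 l10) (Du3 c 0 t l4 l6 l8 l10) t :=
          ((diff_slice_Du3 hc 0 0 l4 l6 l8 l10) t).hasDerivAt
        have hd2 : HasDerivAt (fun r : ℂ => b * r) b t := by
          simpa using (hasDerivAt_id t).const_mul b
        rw [deriv_fun_sub hd1.differentiableAt hd2.differentiableAt, hd1.deriv, hd2.deriv, hB 0 t]
        ring
      have hdiff2 : Differentiable ℂ (fun r : ℂ => c 0 r l4 l6 l8 l10 - b * r) := by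
        intro t
        exact ((diff_slice_Du3 hc 0 0 l4 l6 l8 l10) t).sub (by fun_prop)
      have := is_const_of_deriv_eq_zero hdiff2 hconst2 y 0
      linear_combination this
    rw [h2'] at h1
    linear_combination h1
  -- Euler relation at three points
  have E00 := h0 0 0 l4 l6 l8 l10
  have E01 := h0 0 1 l4 l6 l8 l10
  have E10 := h0 1 0 l4 l6 l8 l10
  rw [hB 0 1] at E01
  rw [hA 1 0] at E10
  rw [hF 0 1] at E01
  rw [hF 1 0] at E10
  rw [← hc0def] at E00
  have hc0 : c0 = 0 := by
    have hmc : m * c0 = 0 := by linear_combination -E00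
    exact (mul_eq_zero.1 hmc).resolve_left hm0
  have hb : b = 0 := by
    rw [hc0] at E01
    have h3 : (m - 3) * b = 0 := by linear_combination -E01
    rcases mul_eq_zero.1 h3 with h | h
    · exact absurd (by linear_combination h) hm3
    · exact h
  have ha : a = 0 := by
    rw [hc0, hb] at E10
    have h1 : (m - 1) * a = 0 := by linear_combination -E10
    rcases mul_eq_zero.1 h1 with h | h
    · exact absurd (by linear_combination h) hm1
    · exact h
  rw [hF u1 u3, hc0, hb, ha]
  ring

end SigmaUniq

namespace SigmaUniq
open Set

lemma Ent1.powMul {h : ℂ → ℂ} (hh : Ent1 h) (k : ℕ) : Ent1 (fun s => s ^ k * h s) :=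
  ((analyticOnNhd_id (𝕜 := ℂ) (s := (univ : Set ℂ))).pow k).mul hh

lemma Ent1.cmulE (c : ℂ) {h : ℂ → ℂ} (hh : Ent1 h) : Ent1 (fun s => c * h s) :=
  analyticOnNhd_const.mul hh

lemma Ent1.addE {f g : ℂ → ℂ} (hf : Ent1 f) (hg : Ent1 g) : Ent1 (fun s => f s + g s) :=
  AnalyticOnNhd.add hf hg

lemma Ent1.term (c : ℂ) (k : ℕ) {h : ℂ → ℂ} (hh : Ent1 h) :
    Ent1 (fun s => c * (s ^ k * h s)) := (hh.powMul k).cmulE c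

lemma itd_term (c : ℂ) {h : ℂ → ℂ} (hh : Ent1 h) (N k : ℕ) :
    iteratedDeriv N (fun s => c * (s ^ k * h s)) 0
      = c * ((N.descFactorial k : ℂ) * iteratedDeriv (N - k) h 0) := by
  rw [itd_cmul c (hh.powMul k), itd_pow_mul hh]

set_option maxHeartbeats 1000000 in
lemma itd_sum10 (N : ℕ) (c1 c2 c3 c4 c5 c6 c7 c8 c9 c10 : ℂ) (k1 k2 k3 k4 k5 k6 k7 k8 k9 k10 : ℕ) (h1 h2 h3 h4 h5 h6 h7 h8 h9 h10 : ℂ → ℂ)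
    (e1 : Ent1 h1)
    (e2 : Ent1 h2)
    (e3 : Ent1 h3)
    (e4 : Ent1 h4)
    (e5 : Ent1 h5)
    (e6 : Ent1 h6)
    (e7 : Ent1 h7)
    (e8 : Ent1 h8)
    (e9 : Ent1 h9)
    (e10 : Ent1 h10) :
    iteratedDeriv N (fun s => c1 * (s ^ k1 * h1 s) + c2 * (s ^ k2 * h2 s) + c3 * (s ^ k3 * h3 s) + c4 * (s ^ k4 * h4 s) + c5 * (s ^ k5 * h5 s) + c6 * (s ^ k6 * h6 s) + c7 * (s ^ k7 * h7 s) + c8 * (s ^ k8 * h8 s) + c9 * (s ^ k9 * h9 s) + c10 * (s ^ k10 * h10 s)) 0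
      = c1 * ((N.descFactorial k1 : ℂ) * iteratedDeriv (N - k1) h1 0) + c2 * ((N.descFactorial k2 : ℂ) * iteratedDeriv (N - k2) h2 0) + c3 * ((N.descFactorial k3 : ℂ) * iteratedDeriv (N - k3) h3 0) + c4 * ((N.descFactorial k4 : ℂ) * iteratedDeriv (N - k4) h4 0) + c5 * ((N.descFactorial k5 : ℂ) * iteratedDeriv (N - k5) h5 0) + c6 * ((N.descFactorial k6 : ℂ) * iteratedDeriv (N - k6) h6 0) + c7 * ((N.descFactorial k7 : ℂ) * iteratedDeriv (N - k7) h7 0) + c8 * ((N.descFactorial k8 : ℂ) * iteratedDeriv (N - k8) h8 0) + c9 * ((N.descFactorial k9 : ℂ) * iteratedDeriv (N - k9) h9 0) + c10 * ((N.descFactorial k10 : ℂ) * iteratedDeriv (N - k10) h10 0) := by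
  have t1 : Ent1 (fun s => c1 * (s ^ k1 * h1 s)) := e1.term c1 k1
  have t2 : Ent1 (fun s => c2 * (s ^ k2 * h2 s)) := e2.term c2 k2
  have t3 : Ent1 (fun s => c3 * (s ^ k3 * h3 s)) := e3.term c3 k3
  have t4 : Ent1 (fun s => c4 * (s ^ k4 * h4 s)) := e4.term c4 k4
  have t5 : Ent1 (fun s => c5 * (s ^ k5 * h5 s)) := e5.term c5 k5
  have t6 : Ent1 (fun s => c6 * (s ^ k6 * h6 s)) := e6.term c6 k6
  have t7 : Ent1 (fun s => c7 * (s ^ k7 * h7 s)) := e7.term c7 k7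
  have t8 : Ent1 (fun s => c8 * (s ^ k8 * h8 s)) := e8.term c8 k8
  have t9 : Ent1 (fun s => c9 * (s ^ k9 * h9 s)) := e9.term c9 k9
  have t10 : Ent1 (fun s => c10 * (s ^ k10 * h10 s)) := e10.term c10 k10
  have S1 : Ent1 (fun s => c1 * (s ^ k1 * h1 s)) := t1
  have S2 : Ent1 (fun s => c1 * (s ^ k1 * h1 s) + c2 * (s ^ k2 * h2 s)) := S1.addE t2
  have S3 : Ent1 (fun s => c1 * (s ^ k1 * h1 s) + c2 * (s ^ k2 * h2 s) + c3 * (s ^ k3 * h3 s)) := S2.addE t3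
  have S4 : Ent1 (fun s => c1 * (s ^ k1 * h1 s) + c2 * (s ^ k2 * h2 s) + c3 * (s ^ k3 * h3 s) + c4 * (s ^ k4 * h4 s)) := S3.addE t4
  have S5 : Ent1 (fun s => c1 * (s ^ k1 * h1 s) + c2 * (s ^ k2 * h2 s) + c3 * (s ^ k3 * h3 s) + c4 * (s ^ k4 * h4 s) + c5 * (s ^ k5 * h5 s)) := S4.addE t5
  have S6 : Ent1 (fun s => c1 * (s ^ k1 * h1 s) + c2 * (s ^ k2 * h2 s) + c3 * (s ^ k3 * h3 s) + c4 * (s ^ k4 * h4 s) + c5 * (s ^ k5 * h5 s) + c6 * (s ^ k6 * h6 s)) := S5.addE t6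
  have S7 : Ent1 (fun s => c1 * (s ^ k1 * h1 s) + c2 * (s ^ k2 * h2 s) + c3 * (s ^ k3 * h3 s) + c4 * (s ^ k4 * h4 s) + c5 * (s ^ k5 * h5 s) + c6 * (s ^ k6 * h6 s) + c7 * (s ^ k7 * h7 s)) := S6.addE t7
  have S8 : Ent1 (fun s => c1 * (s ^ k1 * h1 s) + c2 * (s ^ k2 * h2 s) + c3 * (s ^ k3 * h3 s) + c4 * (s ^ k4 * h4 s) + c5 * (s ^ k5 * h5 s) + c6 * (s ^ k6 * h6 s) + c7 * (s ^ k7 * h7 s) + c8 * (s ^ k8 * h8 s)) := S7.addE t8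
  have S9 : Ent1 (fun s => c1 * (s ^ k1 * h1 s) + c2 * (s ^ k2 * h2 s) + c3 * (s ^ k3 * h3 s) + c4 * (s ^ k4 * h4 s) + c5 * (s ^ k5 * h5 s) + c6 * (s ^ k6 * h6 s) + c7 * (s ^ k7 * h7 s) + c8 * (s ^ k8 * h8 s) + c9 * (s ^ k9 * h9 s)) := S8.addE t9
  have S10 : Ent1 (fun s => c1 * (s ^ k1 * h1 s) + c2 * (s ^ k2 * h2 s) + c3 * (s ^ k3 * h3 s) + c4 * (s ^ k4 * h4 s) + c5 * (s ^ k5 * h5 s) + c6 * (s ^ k6 * h6 s) + c7 * (s ^ k7 * h7 s) + c8 * (s ^ k8 * h8 s) + c9 * (s ^ k9 * h9 s) + c10 * (s ^ k10 * h10 s)) := S9.addE t10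
  rw [itd_add S9 t10 N 0, itd_add S8 t9 N 0, itd_add S7 t8 N 0, itd_add S6 t7 N 0, itd_add S5 t6 N 0, itd_add S4 t5 N 0, itd_add S3 t4 N 0, itd_add S2 t3 N 0, itd_add S1 t2 N 0]
  rw [itd_term c1 e1 N k1, itd_term c2 e2 N k2, itd_term c3 e3 N k3, itd_term c4 e4 N k4, itd_term c5 e5 N k5, itd_term c6 e6 N k6, itd_term c7 e7 N k7, itd_term c8 e8 N k8, itd_term c9 e9 N k9, itd_term c10 e10 N k10]

end SigmaUniq

namespace SigmaUniq
open Set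

set_option maxHeartbeats 2000000 in
lemma TN_all_zero (φ : F6) (hφE : IsEntire6 φ)
    (heq0 : ∀ u1 u3 l4 l6 l8 l10 : ℂ,
      4 * l4 * Dl4 φ u1 u3 l4 l6 l8 l10 + 6 * l6 * Dl6 φ u1 u3 l4 l6 l8 l10 +
        8 * l8 * Dl8 φ u1 u3 l4 l6 l8 l10 + 10 * l10 * Dl10 φ u1 u3 l4 l6 l8 l10 =
      u1 * Du1 φ u1 u3 l4 l6 l8 l10 + 3 * u3 * Du3 φ u1 u3 l4 l6 l8 l10 -
        3 * φ u1 u3 l4 l6 l8 l10)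
    (heq2 : ∀ u1 u3 l4 l6 l8 l10 : ℂ,
      6 * l6 * Dl4 φ u1 u3 l4 l6 l8 l10 +
        (8 * l8 - (12 / 5) * l4 ^ 2) * Dl6 φ u1 u3 l4 l6 l8 l10 +
        (10 * l10 - (8 / 5) * l4 * l6) * Dl8 φ u1 u3 l4 l6 l8 l10 -
        (4 / 5) * l4 * l8 * Dl10 φ u1 u3 l4 l6 l8 l10 =
      (1 / 2) * Du1 (Du1 φ) u1 u3 l4 l6 l8 l10 -
        (4 / 5) * l4 * u3 * Du1 φ u1 u3 l4 l6 l8 l10 +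
        u1 * Du3 φ u1 u3 l4 l6 l8 l10 +
        (-(3 / 10) * l4 * u1 ^ 2 + (1 / 10) * (15 * l8 - 4 * l4 ^ 2) * u3 ^ 2) *
          φ u1 u3 l4 l6 l8 l10)
    (heq4 : ∀ u1 u3 l4 l6 l8 l10 : ℂ,
      8 * l8 * Dl4 φ u1 u3 l4 l6 l8 l10 +
        (10 * l10 - (8 / 5) * l4 * l6) * Dl6 φ u1 u3 l4 l6 l8 l10 +
        (4 * l4 * l8 - (12 / 5) * l6 ^ 2) * Dl8 φ u1 u3 l4 l6 l8 l10 +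
        (6 * l4 * l10 - (6 / 5) * l6 * l8) * Dl10 φ u1 u3 l4 l6 l8 l10 =
      Du1 (Du3 φ) u1 u3 l4 l6 l8 l10 -
        (6 / 5) * l6 * u3 * Du1 φ u1 u3 l4 l6 l8 l10 +
        l4 * u3 * Du3 φ u1 u3 l4 l6 l8 l10 +
        (-(1 / 5) * l6 * u1 ^ 2 + l8 * u1 * u3 +
          (1 / 10) * (30 * l10 - 6 * l6 * l4) * u3 ^ 2 - l4) * φ u1 u3 l4 l6 l8 l10)
    (heq6 : ∀ u1 u3 l4 l6 l8 l10 : ℂ,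
      10 * l10 * Dl4 φ u1 u3 l4 l6 l8 l10 -
        (4 / 5) * l4 * l8 * Dl6 φ u1 u3 l4 l6 l8 l10 +
        (6 * l4 * l10 - (6 / 5) * l6 * l8) * Dl8 φ u1 u3 l4 l6 l8 l10 +
        (4 * l6 * l10 - (8 / 5) * l8 ^ 2) * Dl10 φ u1 u3 l4 l6 l8 l10 =
      (1 / 2) * Du3 (Du3 φ) u1 u3 l4 l6 l8 l10 -
        (3 / 5) * l8 * u3 * Du1 φ u1 u3 l4 l6 l8 l10 +
        (-(1 / 10) * l8 * u1 ^ 2 + 2 * l10 * u1 * u3 - (3 / 10) * l8 * l4 * u3 ^ 2 -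
          (1 / 2) * l6) * φ u1 u3 l4 l6 l8 l10)
    (hinit : ∀ u1 u3 : ℂ, φ u1 u3 0 0 0 0 = 0) :
    ∀ N : ℕ, ∀ u1 u3 l4 l6 l8 l10 : ℂ, TN N φ u1 u3 l4 l6 l8 l10 = 0 := by
  intro N
  induction N using Nat.strong_induction_on with
  | _ N IH =>
  rcases N with _ | M
  · intro u1 u3 l4 l6 l8 l10
    rw [TN_zero hφE]
    exact hinit u1 u3
  · -- vanish helpers
    have VP : ∀ k : ℕ, 1 ≤ k → ∀ u1 u3 l4 l6 l8 l10 : ℂ,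
        ((M + 1).descFactorial k : ℂ) *
          iteratedDeriv (M + 1 - k) (fun s : ℂ => φ u1 u3 (s ^ 4 * l4) (s ^ 6 * l6) (s ^ 8 * l8) (s ^ 10 * l10)) 0 = 0 := by
      intro k hk u1 u3 l4 l6 l8 l10
      by_cases hkN : k ≤ M + 1
      · exact mul_eq_zero_of_right _ (IH (M + 1 - k) (by omega) u1 u3 l4 l6 l8 l10)
      · rw [Nat.descFactorial_eq_zero_iff_lt.2 (by omega), Nat.cast_zero, zero_mul]
    have VB1 : ∀ k : ℕ, 1 ≤ k → ∀ u1 u3 l4 l6 l8 l10 : ℂ,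
        ((M + 1).descFactorial k : ℂ) *
          iteratedDeriv (M + 1 - k) (fun s : ℂ => Du1 φ u1 u3 (s ^ 4 * l4) (s ^ 6 * l6) (s ^ 8 * l8) (s ^ 10 * l10)) 0 = 0 := by
      intro k hk u1 u3 l4 l6 l8 l10
      by_cases hkN : k ≤ M + 1
      · have hz : TN (M + 1 - k) φ = (fun _ _ _ _ _ _ => (0 : ℂ)) := by
          funext a b c d e f
          exact IH (M + 1 - k) (by omega) a b c d e f
        have h1 : TN (M + 1 - k) (Du1 φ) u1 u3 l4 l6 l8 l10 = 0 := by
          rw [← TN_Du1 hφE, hz]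
          simp [Du1]
        exact mul_eq_zero_of_right _ h1
      · rw [Nat.descFactorial_eq_zero_iff_lt.2 (by omega), Nat.cast_zero, zero_mul]
    have VB3 : ∀ k : ℕ, 1 ≤ k → ∀ u1 u3 l4 l6 l8 l10 : ℂ,
        ((M + 1).descFactorial k : ℂ) *
          iteratedDeriv (M + 1 - k) (fun s : ℂ => Du3 φ u1 u3 (s ^ 4 * l4) (s ^ 6 * l6) (s ^ 8 * l8) (s ^ 10 * l10)) 0 = 0 := by
      intro k hk u1 u3 l4 l6 l8 l10
      by_cases hkN : k ≤ M + 1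
      · have hz : TN (M + 1 - k) φ = (fun _ _ _ _ _ _ => (0 : ℂ)) := by
          funext a b c d e f
          exact IH (M + 1 - k) (by omega) a b c d e f
        have h1 : TN (M + 1 - k) (Du3 φ) u1 u3 l4 l6 l8 l10 = 0 := by
          rw [← TN_Du3 hφE, hz]
          simp [Du3]
        exact mul_eq_zero_of_right _ h1
      · rw [Nat.descFactorial_eq_zero_iff_lt.2 (by omega), Nat.cast_zero, zero_mul]
    have VL4 : ∀ k : ℕ, 4 < k → ∀ u1 u3 l4 l6 l8 l10 : ℂ,
        ((M + 1).descFactorial k : ℂ) *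
          iteratedDeriv (M + 1 - k) (fun s : ℂ => Dl4 φ u1 u3 (s ^ 4 * l4) (s ^ 6 * l6) (s ^ 8 * l8) (s ^ 10 * l10)) 0 = 0 := by
      intro k hk u1 u3 l4 l6 l8 l10
      by_cases hkN : k ≤ M + 1
      · have hz : TN (M + 1 - k + 4) φ = (fun _ _ _ _ _ _ => (0 : ℂ)) := by
          funext a b c d e f
          exact IH (M + 1 - k + 4) (by omega) a b c d e f
        have h1 : Dl4 (TN (M + 1 - k + 4) φ) u1 u3 l4 l6 l8 l10 = 0 := by
          rw [hz]
          simp [Dl4]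
        rw [TN_Dl4 hφE (M + 1 - k + 4)] at h1
        have e : M + 1 - k + 4 - 4 = M + 1 - k := by omega
        rw [e] at h1
        have hne : (((M + 1 - k + 4).descFactorial 4 : ℕ) : ℂ) ≠ 0 := by
          rw [Nat.cast_ne_zero]
          intro hzz
          rw [Nat.descFactorial_eq_zero_iff_lt] at hzz
          omega
        have h2 := (mul_eq_zero.1 h1).resolve_left hne
        exact mul_eq_zero_of_right _ h2
      · rw [Nat.descFactorial_eq_zero_iff_lt.2 (by omega), Nat.cast_zero, zero_mul]
    have VL6 : ∀ k : ℕ, 6 < k → ∀ u1 u3 l4 l6 l8 l10 : ℂ,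
        ((M + 1).descFactorial k : ℂ) *
          iteratedDeriv (M + 1 - k) (fun s : ℂ => Dl6 φ u1 u3 (s ^ 4 * l4) (s ^ 6 * l6) (s ^ 8 * l8) (s ^ 10 * l10)) 0 = 0 := by
      intro k hk u1 u3 l4 l6 l8 l10
      by_cases hkN : k ≤ M + 1
      · have hz : TN (M + 1 - k + 6) φ = (fun _ _ _ _ _ _ => (0 : ℂ)) := by
          funext a b c d e f
          exact IH (M + 1 - k + 6) (by omega) a b c d e f
        have h1 : Dl6 (TN (M + 1 - k + 6) φ) u1 u3 l4 l6 l8 l10 = 0 := by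
          rw [hz]
          simp [Dl6]
        rw [TN_Dl6 hφE (M + 1 - k + 6)] at h1
        have e : M + 1 - k + 6 - 6 = M + 1 - k := by omega
        rw [e] at h1
        have hne : (((M + 1 - k + 6).descFactorial 6 : ℕ) : ℂ) ≠ 0 := by
          rw [Nat.cast_ne_zero]
          intro hzz
          rw [Nat.descFactorial_eq_zero_iff_lt] at hzz
          omega
        have h2 := (mul_eq_zero.1 h1).resolve_left hne
        exact mul_eq_zero_of_right _ h2
      · rw [Nat.descFactorial_eq_zero_iff_lt.2 (by omega), Nat.cast_zero, zero_mul]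
    have VL8 : ∀ k : ℕ, 8 < k → ∀ u1 u3 l4 l6 l8 l10 : ℂ,
        ((M + 1).descFactorial k : ℂ) *
          iteratedDeriv (M + 1 - k) (fun s : ℂ => Dl8 φ u1 u3 (s ^ 4 * l4) (s ^ 6 * l6) (s ^ 8 * l8) (s ^ 10 * l10)) 0 = 0 := by
      intro k hk u1 u3 l4 l6 l8 l10
      by_cases hkN : k ≤ M + 1
      · have hz : TN (M + 1 - k + 8) φ = (fun _ _ _ _ _ _ => (0 : ℂ)) := by
          funext a b c d e f
          exact IH (M + 1 - k + 8) (by omega) a b c d e f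
        have h1 : Dl8 (TN (M + 1 - k + 8) φ) u1 u3 l4 l6 l8 l10 = 0 := by
          rw [hz]
          simp [Dl8]
        rw [TN_Dl8 hφE (M + 1 - k + 8)] at h1
        have e : M + 1 - k + 8 - 8 = M + 1 - k := by omega
        rw [e] at h1
        have hne : (((M + 1 - k + 8).descFactorial 8 : ℕ) : ℂ) ≠ 0 := by
          rw [Nat.cast_ne_zero]
          intro hzz
          rw [Nat.descFactorial_eq_zero_iff_lt] at hzz
          omega
        have h2 := (mul_eq_zero.1 h1).resolve_left hne
        exact mul_eq_zero_of_right _ h2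
      · rw [Nat.descFactorial_eq_zero_iff_lt.2 (by omega), Nat.cast_zero, zero_mul]
    have VL10 : ∀ k : ℕ, 10 < k → ∀ u1 u3 l4 l6 l8 l10 : ℂ,
        ((M + 1).descFactorial k : ℂ) *
          iteratedDeriv (M + 1 - k) (fun s : ℂ => Dl10 φ u1 u3 (s ^ 4 * l4) (s ^ 6 * l6) (s ^ 8 * l8) (s ^ 10 * l10)) 0 = 0 := by
      intro k hk u1 u3 l4 l6 l8 l10
      by_cases hkN : k ≤ M + 1
      · have hz : TN (M + 1 - k + 10) φ = (fun _ _ _ _ _ _ => (0 : ℂ)) := by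
          funext a b c d e f
          exact IH (M + 1 - k + 10) (by omega) a b c d e f
        have h1 : Dl10 (TN (M + 1 - k + 10) φ) u1 u3 l4 l6 l8 l10 = 0 := by
          rw [hz]
          simp [Dl10]
        rw [TN_Dl10 hφE (M + 1 - k + 10)] at h1
        have e : M + 1 - k + 10 - 10 = M + 1 - k := by omega
        rw [e] at h1
        have hne : (((M + 1 - k + 10).descFactorial 10 : ℕ) : ℂ) ≠ 0 := by
          rw [Nat.cast_ne_zero]
          intro hzz
          rw [Nat.descFactorial_eq_zero_iff_lt] at hzz
          omega
        have h2 := (mul_eq_zero.1 h1).resolve_left hne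
        exact mul_eq_zero_of_right _ h2
      · rw [Nat.descFactorial_eq_zero_iff_lt.2 (by omega), Nat.cast_zero, zero_mul]
    have KEY0 : ∀ u1 u3 l4 l6 l8 l10 : ℂ,
        u1 * Du1 (TN (M + 1) φ) u1 u3 l4 l6 l8 l10
          + 3 * u3 * Du3 (TN (M + 1) φ) u1 u3 l4 l6 l8 l10
          = (((M + 1 : ℕ) : ℂ) + 3) * TN (M + 1) φ u1 u3 l4 l6 l8 l10 := by
      intro u1 u3 l4 l6 l8 l10
      have Pent : Ent1 (fun s : ℂ => φ u1 u3 (s ^ 4 * l4) (s ^ 6 * l6) (s ^ 8 * l8) (s ^ 10 * l10)) := slice1_entire hφE u1 u3 l4 l6 l8 l10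
      have hpt : (fun s : ℂ => s * deriv (fun s' : ℂ => φ u1 u3 (s' ^ 4 * l4) (s' ^ 6 * l6) (s' ^ 8 * l8) (s' ^ 10 * l10)) s)
          = (fun s : ℂ => (u1) * (s ^ 0 * Du1 φ u1 u3 (s ^ 4 * l4) (s ^ 6 * l6) (s ^ 8 * l8) (s ^ 10 * l10)) + (3 * u3) * (s ^ 0 * Du3 φ u1 u3 (s ^ 4 * l4) (s ^ 6 * l6) (s ^ 8 * l8) (s ^ 10 * l10)) + (-3) * (s ^ 0 * φ u1 u3 (s ^ 4 * l4) (s ^ 6 * l6) (s ^ 8 * l8) (s ^ 10 * l10)) + (0) * (s ^ 1 * φ u1 u3 (s ^ 4 * l4) (s ^ 6 * l6) (s ^ 8 * l8) (s ^ 10 * l10)) + (0) * (s ^ 1 * φ u1 u3 (s ^ 4 * l4) (s ^ 6 * l6) (s ^ 8 * l8) (s ^ 10 * l10)) + (0) * (s ^ 1 * φ u1 u3 (s ^ 4 * l4) (s ^ 6 * l6) (s ^ 8 * l8) (s ^ 10 * l10)) + (0) * (s ^ 1 * φ u1 u3 (s ^ 4 * l4) (s ^ 6 * l6) (s ^ 8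 * l8) (s ^ 10 * l10)) + (0) * (s ^ 1 * φ u1 u3 (s ^ 4 * l4) (s ^ 6 * l6) (s ^ 8 * l8) (s ^ 10 * l10)) + (0) * (s ^ 1 * φ u1 u3 (s ^ 4 * l4) (s ^ 6 * l6) (s ^ 8 * l8) (s ^ 10 * l10)) + (0) * (s ^ 1 * φ u1 u3 (s ^ 4 * l4) (s ^ 6 * l6) (s ^ 8 * l8) (s ^ 10 * l10))) := by
        funext s
        rw [(hasDerivAt_scaleslice hφE u1 u3 l4 l6 l8 l10 s).deriv]
        linear_combination heq0 u1 u3 (s ^ 4 * l4) (s ^ 6 * l6) (s ^ 8 * l8) (s ^ 10 * l10)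
      have hL : iteratedDeriv (M + 1) (fun s : ℂ => s * deriv (fun s' : ℂ => φ u1 u3 (s' ^ 4 * l4) (s' ^ 6 * l6) (s' ^ 8 * l8) (s' ^ 10 * l10)) s) 0
          = ((M + 1 : ℕ) : ℂ) * iteratedDeriv (M + 1) (fun s : ℂ => φ u1 u3 (s ^ 4 * l4) (s ^ 6 * l6) (s ^ 8 * l8) (s ^ 10 * l10)) 0 := by
        rw [itd_smul1 Pent.derivE (M + 1), Nat.add_sub_cancel, ← iteratedDeriv_succ']
      have hR := itd_sum10 (M + 1) (u1) (3 * u3) (-3) (0) (0) (0) (0) (0) (0) (0) 0 0 0 1 1 1 1 1 1 1 (fun s : ℂ => Du1 φ u1 u3 (s ^ 4 * l4) (s ^ 6 * l6) (s ^ 8 * l8) (s ^ 10 * l10)) (fun s : ℂ => Du3 φ u1 u3 (s ^ 4 * l4) (s ^ 6 * l6) (s ^ 8 * l8) (s ^ 10 * l10)) (fun s : ℂ => φ u1 u3 (s ^ 4 * l4) (s ^ 6 * l6) (s ^ 8 * l8) (s ^ 10 * l10)) (fun s : ℂ => φ u1 u3 (s ^ 4 * l4) (s ^ 6 * l6) (s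 ^ 8 * l8) (s ^ 10 * l10)) (fun s : ℂ => φ u1 u3 (s ^ 4 * l4) (s ^ 6 * l6) (s ^ 8 * l8) (s ^ 10 * l10)) (fun s : ℂ => φ u1 u3 (s ^ 4 * l4) (s ^ 6 * l6) (s ^ 8 * l8) (s ^ 10 * l10)) (fun s : ℂ => φ u1 u3 (s ^ 4 * l4) (s ^ 6 * l6) (s ^ 8 * l8) (s ^ 10 * l10)) (fun s : ℂ => φ u1 u3 (s ^ 4 * l4) (s ^ 6 * l6) (s ^ 8 * l8) (s ^ 10 * l10)) (fun s : ℂ => φ u1 u3 (s ^ 4 * l4) (s ^ 6 * l6) (s ^ 8 * l8) (s ^ 10 * l10)) (fun s : ℂ => φ u1 u3 (s ^ 4 * l4) (s ^ 6 * l6) (s ^ 8 * l8) (s ^ 10 * l10)) (slice1_entire (entire_Du1 hφE) u1 u3 l4 l6 l8 l10) (slice1_entire (entire_Du3 hφE) u1 u3 l4 l6 l8 l10) (slice1_entire hφE u1 u3 l4 l6 l8 l10) (slice1_entire hφE u1 u3 l4 l6 l8 l10) (slice1_entire hφE u1 u3 l4 l6 l8 l10) (slice1_entire hφE u1 u3 l4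 l6 l8 l10) (slice1_entire hφE u1 u3 l4 l6 l8 l10) (slice1_entire hφE u1 u3 l4 l6 l8 l10) (slice1_entire hφE u1 u3 l4 l6 l8 l10) (slice1_entire hφE u1 u3 l4 l6 l8 l10)
      have hcomb : ((M + 1 : ℕ) : ℂ) * iteratedDeriv (M + 1) (fun s : ℂ => φ u1 u3 (s ^ 4 * l4) (s ^ 6 * l6) (s ^ 8 * l8) (s ^ 10 * l10)) 0
          = (u1) * (((M + 1).descFactorial 0 : ℂ) * iteratedDeriv (M + 1 - 0) (fun s : ℂ => Du1 φ u1 u3 (s ^ 4 * l4) (s ^ 6 * l6) (s ^ 8 * l8) (s ^ 10 * l10)) 0) + (3 * u3) * (((M + 1).descFactorial 0 : ℂ) * iteratedDeriv (M + 1 - 0) (fun s : ℂ => Du3 φ u1 u3 (s ^ 4 * l4) (s ^ 6 * l6) (s ^ 8 * l8) (s ^ 10 * l10)) 0) + (-3) * (((M + 1).descFactorial 0 : ℂ) * iteratedDeriv (M + 1 - 0) (fun s : ℂ => φ u1 u3 (s ^ 4 * l4) (s ^ 6 * l6) (s ^ 8 * l8) (s ^ 10 * l10)) 0) + (0) * (((M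 + 1).descFactorial 1 : ℂ) * iteratedDeriv (M + 1 - 1) (fun s : ℂ => φ u1 u3 (s ^ 4 * l4) (s ^ 6 * l6) (s ^ 8 * l8) (s ^ 10 * l10)) 0) + (0) * (((M + 1).descFactorial 1 : ℂ) * iteratedDeriv (M + 1 - 1) (fun s : ℂ => φ u1 u3 (s ^ 4 * l4) (s ^ 6 * l6) (s ^ 8 * l8) (s ^ 10 * l10)) 0) + (0) * (((M + 1).descFactorial 1 : ℂ) * iteratedDeriv (M + 1 - 1) (fun s : ℂ => φ u1 u3 (s ^ 4 * l4) (s ^ 6 * l6) (s ^ 8 * l8) (s ^ 10 * l10)) 0) + (0) * (((M + 1).descFactorial 1 : ℂ) * iteratedDeriv (M + 1 - 1) (fun s : ℂ => φ u1 u3 (s ^ 4 * l4) (s ^ 6 * l6) (s ^ 8 * l8) (s ^ 10 * l10)) 0) + (0) * (((M + 1).descFactorial 1 : ℂ) * iteratedDeriv (M + 1 - 1) (fun s : ℂ => φ u1 u3 (s ^ 4 * l4) (s ^ 6 * l6) (s ^ 8 * l8) (s ^ 10 * l10)) 0) + (0) * (((M + 1).descFactorial 1 : ℂ) * iteratedDeriv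 (M + 1 - 1) (fun s : ℂ => φ u1 u3 (s ^ 4 * l4) (s ^ 6 * l6) (s ^ 8 * l8) (s ^ 10 * l10)) 0) + (0) * (((M + 1).descFactorial 1 : ℂ) * iteratedDeriv (M + 1 - 1) (fun s : ℂ => φ u1 u3 (s ^ 4 * l4) (s ^ 6 * l6) (s ^ 8 * l8) (s ^ 10 * l10)) 0) := by
        rw [← hL, hpt]
        exact hR
      simp only [Nat.descFactorial_zero, Nat.cast_one, one_mul, Nat.sub_zero] at hcomb
      have gB1 : Du1 (TN (M + 1) φ) u1 u3 l4 l6 l8 l10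
          = iteratedDeriv (M + 1) (fun s : ℂ => Du1 φ u1 u3 (s ^ 4 * l4) (s ^ 6 * l6) (s ^ 8 * l8) (s ^ 10 * l10)) 0 :=
        TN_Du1 hφE (M + 1) u1 u3 l4 l6 l8 l10
      have gB3 : Du3 (TN (M + 1) φ) u1 u3 l4 l6 l8 l10
          = iteratedDeriv (M + 1) (fun s : ℂ => Du3 φ u1 u3 (s ^ 4 * l4) (s ^ 6 * l6) (s ^ 8 * l8) (s ^ 10 * l10)) 0 :=
        TN_Du3 hφE (M + 1) u1 u3 l4 l6 l8 l10
      have gP : TN (M + 1) φ u1 u3 l4 l6 l8 l10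
          = iteratedDeriv (M + 1) (fun s : ℂ => φ u1 u3 (s ^ 4 * l4) (s ^ 6 * l6) (s ^ 8 * l8) (s ^ 10 * l10)) 0 := rfl
      rw [gB1, gB3, gP]
      linear_combination -hcomb
    have KEY2 : ∀ u1 u3 l4 l6 l8 l10 : ℂ,
        (1 / 2) * Du1 (Du1 (TN (M + 1) φ)) u1 u3 l4 l6 l8 l10
          + u1 * Du3 (TN (M + 1) φ) u1 u3 l4 l6 l8 l10 = 0 := by
      intro u1 u3 l4 l6 l8 l10
      have B11ent : Ent1 (fun s : ℂ => Du1 (Du1 φ) u1 u3 (s ^ 4 * l4) (s ^ 6 * l6) (s ^ 8 * l8) (s ^ 10 * l10)) :=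
        slice1_entire (entire_Du1 (entire_Du1 hφE)) u1 u3 l4 l6 l8 l10
      have B3ent : Ent1 (fun s : ℂ => Du3 φ u1 u3 (s ^ 4 * l4) (s ^ 6 * l6) (s ^ 8 * l8) (s ^ 10 * l10)) :=
        slice1_entire (entire_Du3 hφE) u1 u3 l4 l6 l8 l10
      have hpt : (fun s : ℂ => (1 / 2) * Du1 (Du1 φ) u1 u3 (s ^ 4 * l4) (s ^ 6 * l6) (s ^ 8 * l8) (s ^ 10 * l10) + u1 * Du3 φ u1 u3 (s ^ 4 * l4) (s ^ 6 * l6) (s ^ 8 * l8) (s ^ 10 * l10))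
          = (fun s : ℂ => (6 * l6) * (s ^ 6 * Dl4 φ u1 u3 (s ^ 4 * l4) (s ^ 6 * l6) (s ^ 8 * l8) (s ^ 10 * l10)) + (8 * l8 - (12/5) * l4 ^ 2) * (s ^ 8 * Dl6 φ u1 u3 (s ^ 4 * l4) (s ^ 6 * l6) (s ^ 8 * l8) (s ^ 10 * l10)) + (10 * l10 - (8/5) * l4 * l6) * (s ^ 10 * Dl8 φ u1 u3 (s ^ 4 * l4) (s ^ 6 * l6) (s ^ 8 * l8) (s ^ 10 * l10)) + (-((4/5) * l4 * l8)) * (s ^ 12 * Dl10 φ u1 u3 (s ^ 4 * l4) (s ^ 6 * l6) (s ^ 8 * l8) (s ^ 10 * l10)) + ((4/5) * l4 * u3) * (s ^ 4 * Du1 φ u1 u3 (s ^ 4 * l4) (s ^ 6 * l6) (s ^ 8 * l8) (s ^ 10 * l10)) + ((3/10) * l4 * u1 ^ 2) * (s ^ 4 * φ u1 u3 (s ^ 4 * l4) (s ^ 6 * l6) (s ^ 8 * l8) (s ^ 10 * l10)) + ((2/5) * l4 ^ 2 * u3 ^ 2 - (3/2) * l8 * u3 ^ 2) * (s ^ 8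 * φ u1 u3 (s ^ 4 * l4) (s ^ 6 * l6) (s ^ 8 * l8) (s ^ 10 * l10)) + (0) * (s ^ 1 * φ u1 u3 (s ^ 4 * l4) (s ^ 6 * l6) (s ^ 8 * l8) (s ^ 10 * l10)) + (0) * (s ^ 1 * φ u1 u3 (s ^ 4 * l4) (s ^ 6 * l6) (s ^ 8 * l8) (s ^ 10 * l10)) + (0) * (s ^ 1 * φ u1 u3 (s ^ 4 * l4) (s ^ 6 * l6) (s ^ 8 * l8) (s ^ 10 * l10))) := by
        funext s
        linear_combination -heq2 u1 u3 (s ^ 4 * l4) (s ^ 6 * l6) (s ^ 8 * l8) (s ^ 10 * l10)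
      have hL : iteratedDeriv (M + 1) (fun s : ℂ => (1 / 2) * Du1 (Du1 φ) u1 u3 (s ^ 4 * l4) (s ^ 6 * l6) (s ^ 8 * l8) (s ^ 10 * l10) + u1 * Du3 φ u1 u3 (s ^ 4 * l4) (s ^ 6 * l6) (s ^ 8 * l8) (s ^ 10 * l10)) 0
          = (1 / 2) * iteratedDeriv (M + 1) (fun s : ℂ => Du1 (Du1 φ) u1 u3 (s ^ 4 * l4) (s ^ 6 * l6) (s ^ 8 * l8) (s ^ 10 * l10)) 0
            + u1 * iteratedDeriv (M + 1) (fun s : ℂ => Du3 φ u1 u3 (s ^ 4 * l4) (s ^ 6 * l6) (s ^ 8 * l8) (s ^ 10 * l10)) 0 := by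
        rw [itd_add (B11ent.cmulE (1 / 2)) (B3ent.cmulE u1) (M + 1) 0,
          itd_cmul (1 / 2) B11ent (M + 1) 0, itd_cmul u1 B3ent (M + 1) 0]
      have hR := itd_sum10 (M + 1) (6 * l6) (8 * l8 - (12/5) * l4 ^ 2) (10 * l10 - (8/5) * l4 * l6) (-((4/5) * l4 * l8)) ((4/5) * l4 * u3) ((3/10) * l4 * u1 ^ 2) ((2/5) * l4 ^ 2 * u3 ^ 2 - (3/2) * l8 * u3 ^ 2) (0) (0) (0) 6 8 10 12 4 4 8 1 1 1 (fun s : ℂ => Dl4 φ u1 u3 (s ^ 4 * l4) (s ^ 6 * l6) (s ^ 8 * l8) (s ^ 10 * l10)) (fun s : ℂ => Dl6 φ u1 u3 (s ^ 4 * l4) (s ^ 6 * l6) (s ^ 8 * l8) (s ^ 10 * l10)) (fun s : ℂ => Dl8 φ u1 u3 (s ^ 4 * l4) (s ^ 6 * l6) (s ^ 8 * l8) (s ^ 10 * l10)) (fun s : ℂ => Dl10 φ u1 u3 (s ^ 4 * l4) (s ^ 6 * l6) (s ^ 8 * l8) (s ^ 10 * l10)) (fun s : ℂ => Du1 φ u1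 u3 (s ^ 4 * l4) (s ^ 6 * l6) (s ^ 8 * l8) (s ^ 10 * l10)) (fun s : ℂ => φ u1 u3 (s ^ 4 * l4) (s ^ 6 * l6) (s ^ 8 * l8) (s ^ 10 * l10)) (fun s : ℂ => φ u1 u3 (s ^ 4 * l4) (s ^ 6 * l6) (s ^ 8 * l8) (s ^ 10 * l10)) (fun s : ℂ => φ u1 u3 (s ^ 4 * l4) (s ^ 6 * l6) (s ^ 8 * l8) (s ^ 10 * l10)) (fun s : ℂ => φ u1 u3 (s ^ 4 * l4) (s ^ 6 * l6) (s ^ 8 * l8) (s ^ 10 * l10)) (fun s : ℂ => φ u1 u3 (s ^ 4 * l4) (s ^ 6 * l6) (s ^ 8 * l8) (s ^ 10 * l10)) (slice1_entire (entire_Dl4 hφE) u1 u3 l4 l6 l8 l10) (slice1_entire (entire_Dl6 hφE) u1 u3 l4 l6 l8 l10) (slice1_entire (entire_Dl8 hφE) u1 u3 l4 l6 l8 l10) (slice1_entire (entire_Dl10 hφE) u1 u3 l4 l6 l8 l10) (slice1_entire (entire_Du1 hφE) u1 u3 l4 l6 l8 l10) (slice1_entire hφE u1 u3 l4 l6 l8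 l10) (slice1_entire hφE u1 u3 l4 l6 l8 l10) (slice1_entire hφE u1 u3 l4 l6 l8 l10) (slice1_entire hφE u1 u3 l4 l6 l8 l10) (slice1_entire hφE u1 u3 l4 l6 l8 l10)
      have hcomb : (1 / 2) * iteratedDeriv (M + 1) (fun s : ℂ => Du1 (Du1 φ) u1 u3 (s ^ 4 * l4) (s ^ 6 * l6) (s ^ 8 * l8) (s ^ 10 * l10)) 0
            + u1 * iteratedDeriv (M + 1) (fun s : ℂ => Du3 φ u1 u3 (s ^ 4 * l4) (s ^ 6 * l6) (s ^ 8 * l8) (s ^ 10 * l10)) 0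
          = (6 * l6) * (((M + 1).descFactorial 6 : ℂ) * iteratedDeriv (M + 1 - 6) (fun s : ℂ => Dl4 φ u1 u3 (s ^ 4 * l4) (s ^ 6 * l6) (s ^ 8 * l8) (s ^ 10 * l10)) 0) + (8 * l8 - (12/5) * l4 ^ 2) * (((M + 1).descFactorial 8 : ℂ) * iteratedDeriv (M + 1 - 8) (fun s : ℂ => Dl6 φ u1 u3 (s ^ 4 * l4) (s ^ 6 * l6) (s ^ 8 * l8) (s ^ 10 * l10)) 0) + (10 * l10 - (8/5) * l4 * l6) * (((M + 1).descFactorial 10 : ℂ) * iteratedDeriv (M + 1 - 10) (fun s : ℂ => Dl8 φ u1 u3 (s ^ 4 * l4) (s ^ 6 * l6) (s ^ 8 * l8) (s ^ 10 * l10)) 0) + (-((4/5) * l4 * l8)) * (((M + 1).descFactorial 12 : ℂ) * iteratedDeriv (M + 1 - 12) (fun s : ℂ => Dl10 φ u1 u3 (s ^ 4 * l4) (s ^ 6 * l6) (s ^ 8 * l8) (s ^ 10 * l10)) 0) + ((4/5) * l4 * u3) * (((M + 1).descFactorial 4 : ℂ) * iteratedDeriv (M + 1 - 4) (fun s : ℂ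 => Du1 φ u1 u3 (s ^ 4 * l4) (s ^ 6 * l6) (s ^ 8 * l8) (s ^ 10 * l10)) 0) + ((3/10) * l4 * u1 ^ 2) * (((M + 1).descFactorial 4 : ℂ) * iteratedDeriv (M + 1 - 4) (fun s : ℂ => φ u1 u3 (s ^ 4 * l4) (s ^ 6 * l6) (s ^ 8 * l8) (s ^ 10 * l10)) 0) + ((2/5) * l4 ^ 2 * u3 ^ 2 - (3/2) * l8 * u3 ^ 2) * (((M + 1).descFactorial 8 : ℂ) * iteratedDeriv (M + 1 - 8) (fun s : ℂ => φ u1 u3 (s ^ 4 * l4) (s ^ 6 * l6) (s ^ 8 * l8) (s ^ 10 * l10)) 0) + (0) * (((M + 1).descFactorial 1 : ℂ) * iteratedDeriv (M + 1 - 1) (fun s : ℂ => φ u1 u3 (s ^ 4 * l4) (s ^ 6 * l6) (s ^ 8 * l8) (s ^ 10 * l10)) 0) + (0) * (((M + 1).descFactorial 1 : ℂ) * iteratedDeriv (M + 1 - 1) (fun s : ℂ => φ u1 u3 (s ^ 4 * l4) (s ^ 6 * l6) (s ^ 8 * l8) (s ^ 10 * l10)) 0) + (0) * (((M + 1).descFactorial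 1 : ℂ) * iteratedDeriv (M + 1 - 1) (fun s : ℂ => φ u1 u3 (s ^ 4 * l4) (s ^ 6 * l6) (s ^ 8 * l8) (s ^ 10 * l10)) 0) := by
        rw [← hL, hpt]
        exact hR
      rw [VL4 6 (by norm_num : 4 < 6) u1 u3 l4 l6 l8 l10, VL6 8 (by norm_num : 6 < 8) u1 u3 l4 l6 l8 l10, VL8 10 (by norm_num : 8 < 10) u1 u3 l4 l6 l8 l10, VL10 12 (by norm_num : 10 < 12) u1 u3 l4 l6 l8 l10, VB1 4 (by norm_num : 1 ≤ 4) u1 u3 l4 l6 l8 l10, VP 4 (by norm_num : 1 ≤ 4) u1 u3 l4 l6 l8 l10, VP 8 (by norm_num : 1 ≤ 8) u1 u3 l4 l6 l8 l10] at hcomb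
      have g1 : Du1 (Du1 (TN (M + 1) φ)) u1 u3 l4 l6 l8 l10
          = iteratedDeriv (M + 1) (fun s : ℂ => Du1 (Du1 φ) u1 u3 (s ^ 4 * l4) (s ^ 6 * l6) (s ^ 8 * l8) (s ^ 10 * l10)) 0 := by
        have f1 : Du1 (TN (M + 1) φ) = TN (M + 1) (Du1 φ) := by
          funext a b c d e f
          exact TN_Du1 hφE (M + 1) a b c d e f
        rw [f1]
        exact TN_Du1 (entire_Du1 hφE) (M + 1) u1 u3 l4 l6 l8 l10
      have g3 : Du3 (TN (M + 1) φ) u1 u3 l4 l6 l8 l10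
          = iteratedDeriv (M + 1) (fun s : ℂ => Du3 φ u1 u3 (s ^ 4 * l4) (s ^ 6 * l6) (s ^ 8 * l8) (s ^ 10 * l10)) 0 :=
        TN_Du3 hφE (M + 1) u1 u3 l4 l6 l8 l10
      rw [g1, g3]
      linear_combination hcomb
    have KEY4 : ∀ u1 u3 l4 l6 l8 l10 : ℂ,
        Du1 (Du3 (TN (M + 1) φ)) u1 u3 l4 l6 l8 l10 = 0 := by
      intro u1 u3 l4 l6 l8 l10
      have hpt : (fun s : ℂ => Du1 (Du3 φ) u1 u3 (s ^ 4 * l4) (s ^ 6 * l6) (s ^ 8 * l8) (s ^ 10 * l10))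
          = (fun s : ℂ => (8 * l8) * (s ^ 8 * Dl4 φ u1 u3 (s ^ 4 * l4) (s ^ 6 * l6) (s ^ 8 * l8) (s ^ 10 * l10)) + (10 * l10 - (8/5) * l4 * l6) * (s ^ 10 * Dl6 φ u1 u3 (s ^ 4 * l4) (s ^ 6 * l6) (s ^ 8 * l8) (s ^ 10 * l10)) + (4 * l4 * l8 - (12/5) * l6 ^ 2) * (s ^ 12 * Dl8 φ u1 u3 (s ^ 4 * l4) (s ^ 6 * l6) (s ^ 8 * l8) (s ^ 10 * l10)) + (6 * l4 * l10 - (6/5) * l6 * l8) * (s ^ 14 * Dl10 φ u1 u3 (s ^ 4 * l4) (s ^ 6 * l6) (s ^ 8 * l8) (s ^ 10 * l10)) + ((6/5) * l6 * u3) * (s ^ 6 * Du1 φ u1 u3 (s ^ 4 * l4) (s ^ 6 * l6) (s ^ 8 * l8) (s ^ 10 * l10)) + (-(l4 * u3)) * (s ^ 4 * Du3 φ u1 u3 (s ^ 4 * l4) (s ^ 6 * l6) (s ^ 8 * l8) (s ^ 10 * l10)) + ((1/5) * l6 * u1 ^ 2) * (s ^ 6 * φ u1 u3 (s ^ 4 *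 l4) (s ^ 6 * l6) (s ^ 8 * l8) (s ^ 10 * l10)) + (-(l8 * u1 * u3)) * (s ^ 8 * φ u1 u3 (s ^ 4 * l4) (s ^ 6 * l6) (s ^ 8 * l8) (s ^ 10 * l10)) + ((3/5) * l6 * l4 * u3 ^ 2 - 3 * l10 * u3 ^ 2) * (s ^ 10 * φ u1 u3 (s ^ 4 * l4) (s ^ 6 * l6) (s ^ 8 * l8) (s ^ 10 * l10)) + (l4) * (s ^ 4 * φ u1 u3 (s ^ 4 * l4) (s ^ 6 * l6) (s ^ 8 * l8) (s ^ 10 * l10))) := by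
        funext s
        linear_combination -heq4 u1 u3 (s ^ 4 * l4) (s ^ 6 * l6) (s ^ 8 * l8) (s ^ 10 * l10)
      have hR := itd_sum10 (M + 1) (8 * l8) (10 * l10 - (8/5) * l4 * l6) (4 * l4 * l8 - (12/5) * l6 ^ 2) (6 * l4 * l10 - (6/5) * l6 * l8) ((6/5) * l6 * u3) (-(l4 * u3)) ((1/5) * l6 * u1 ^ 2) (-(l8 * u1 * u3)) ((3/5) * l6 * l4 * u3 ^ 2 - 3 * l10 * u3 ^ 2) (l4) 8 10 12 14 6 4 6 8 10 4 (fun s : ℂ => Dl4 φ u1 u3 (s ^ 4 * l4) (s ^ 6 * l6) (s ^ 8 * l8) (s ^ 10 * l10)) (fun s : ℂ => Dl6 φ u1 u3 (s ^ 4 * l4) (s ^ 6 * l6) (s ^ 8 * l8) (s ^ 10 * l10)) (fun s : ℂ => Dl8 φ u1 u3 (s ^ 4 * l4) (s ^ 6 * l6) (s ^ 8 * l8) (s ^ 10 * l10)) (fun s : ℂ => Dl10 φ u1 u3 (s ^ 4 * l4) (s ^ 6 * l6) (s ^ 8 * l8) (s ^ 10 * l10)) (fun s : ℂ => Du1 φ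 u1 u3 (s ^ 4 * l4) (s ^ 6 * l6) (s ^ 8 * l8) (s ^ 10 * l10)) (fun s : ℂ => Du3 φ u1 u3 (s ^ 4 * l4) (s ^ 6 * l6) (s ^ 8 * l8) (s ^ 10 * l10)) (fun s : ℂ => φ u1 u3 (s ^ 4 * l4) (s ^ 6 * l6) (s ^ 8 * l8) (s ^ 10 * l10)) (fun s : ℂ => φ u1 u3 (s ^ 4 * l4) (s ^ 6 * l6) (s ^ 8 * l8) (s ^ 10 * l10)) (fun s : ℂ => φ u1 u3 (s ^ 4 * l4) (s ^ 6 * l6) (s ^ 8 * l8) (s ^ 10 * l10)) (fun s : ℂ => φ u1 u3 (s ^ 4 * l4) (s ^ 6 * l6) (s ^ 8 * l8) (s ^ 10 * l10)) (slice1_entire (entire_Dl4 hφE) u1 u3 l4 l6 l8 l10) (slice1_entire (entire_Dl6 hφE) u1 u3 l4 l6 l8 l10) (slice1_entire (entire_Dl8 hφE) u1 u3 l4 l6 l8 l10) (slice1_entire (entire_Dl10 hφE) u1 u3 l4 l6 l8 l10) (slice1_entire (entire_Du1 hφE) u1 u3 l4 l6 l8 l10) (slice1_entire (entire_Du3 hφE)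 u1 u3 l4 l6 l8 l10) (slice1_entire hφE u1 u3 l4 l6 l8 l10) (slice1_entire hφE u1 u3 l4 l6 l8 l10) (slice1_entire hφE u1 u3 l4 l6 l8 l10) (slice1_entire hφE u1 u3 l4 l6 l8 l10)
      have hcomb : iteratedDeriv (M + 1) (fun s : ℂ => Du1 (Du3 φ) u1 u3 (s ^ 4 * l4) (s ^ 6 * l6) (s ^ 8 * l8) (s ^ 10 * l10)) 0
          = (8 * l8) * (((M + 1).descFactorial 8 : ℂ) * iteratedDeriv (M + 1 - 8) (fun s : ℂ => Dl4 φ u1 u3 (s ^ 4 * l4) (s ^ 6 * l6) (s ^ 8 * l8) (s ^ 10 * l10)) 0) + (10 * l10 - (8/5) * l4 * l6) * (((M + 1).descFactorial 10 : ℂ) * iteratedDeriv (M + 1 - 10) (fun s : ℂ => Dl6 φ u1 u3 (s ^ 4 * l4) (s ^ 6 * l6) (s ^ 8 * l8) (s ^ 10 * l10)) 0) + (4 * l4 * l8 - (12/5) * l6 ^ 2) * (((M + 1).descFactorial 12 : ℂ) * iteratedDeriv (M + 1 - 12) (fun s : ℂ => Dl8 φ u1 u3 (s ^ 4 * l4)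 (s ^ 6 * l6) (s ^ 8 * l8) (s ^ 10 * l10)) 0) + (6 * l4 * l10 - (6/5) * l6 * l8) * (((M + 1).descFactorial 14 : ℂ) * iteratedDeriv (M + 1 - 14) (fun s : ℂ => Dl10 φ u1 u3 (s ^ 4 * l4) (s ^ 6 * l6) (s ^ 8 * l8) (s ^ 10 * l10)) 0) + ((6/5) * l6 * u3) * (((M + 1).descFactorial 6 : ℂ) * iteratedDeriv (M + 1 - 6) (fun s : ℂ => Du1 φ u1 u3 (s ^ 4 * l4) (s ^ 6 * l6) (s ^ 8 * l8) (s ^ 10 * l10)) 0) + (-(l4 * u3)) * (((M + 1).descFactorial 4 : ℂ) * iteratedDeriv (M + 1 - 4) (fun s : ℂ => Du3 φ u1 u3 (s ^ 4 * l4) (s ^ 6 * l6) (s ^ 8 * l8) (s ^ 10 * l10)) 0) + ((1/5) * l6 * u1 ^ 2) * (((M + 1).descFactorial 6 : ℂ) * iteratedDeriv (M + 1 - 6) (fun s : ℂ => φ u1 u3 (s ^ 4 * l4) (s ^ 6 * l6) (s ^ 8 * l8) (s ^ 10 * l10)) 0) + (-(l8 * u1 * u3)) * (((M + 1).descFactorial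 8 : ℂ) * iteratedDeriv (M + 1 - 8) (fun s : ℂ => φ u1 u3 (s ^ 4 * l4) (s ^ 6 * l6) (s ^ 8 * l8) (s ^ 10 * l10)) 0) + ((3/5) * l6 * l4 * u3 ^ 2 - 3 * l10 * u3 ^ 2) * (((M + 1).descFactorial 10 : ℂ) * iteratedDeriv (M + 1 - 10) (fun s : ℂ => φ u1 u3 (s ^ 4 * l4) (s ^ 6 * l6) (s ^ 8 * l8) (s ^ 10 * l10)) 0) + (l4) * (((M + 1).descFactorial 4 : ℂ) * iteratedDeriv (M + 1 - 4) (fun s : ℂ => φ u1 u3 (s ^ 4 * l4) (s ^ 6 * l6) (s ^ 8 * l8) (s ^ 10 * l10)) 0) := by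
        rw [hpt]
        exact hR
      rw [VL4 8 (by norm_num : 4 < 8) u1 u3 l4 l6 l8 l10, VL6 10 (by norm_num : 6 < 10) u1 u3 l4 l6 l8 l10, VL8 12 (by norm_num : 8 < 12) u1 u3 l4 l6 l8 l10, VL10 14 (by norm_num : 10 < 14) u1 u3 l4 l6 l8 l10, VB1 6 (by norm_num : 1 ≤ 6) u1 u3 l4 l6 l8 l10, VB3 4 (by norm_num : 1 ≤ 4) u1 u3 l4 l6 l8 l10, VP 6 (by norm_num : 1 ≤ 6) u1 u3 l4 l6 l8 l10, VP 8 (by norm_num : 1 ≤ 8) u1 u3 l4 l6 l8 l10, VP 10 (by norm_num : 1 ≤ 10) u1 u3 l4 l6 l8 l10, VP 4 (by norm_num : 1 ≤ 4) u1 u3 l4 l6 l8 l10] at hcomb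
      have g1 : Du1 (Du3 (TN (M + 1) φ)) u1 u3 l4 l6 l8 l10
          = iteratedDeriv (M + 1) (fun s : ℂ => Du1 (Du3 φ) u1 u3 (s ^ 4 * l4) (s ^ 6 * l6) (s ^ 8 * l8) (s ^ 10 * l10)) 0 := by
        have f1 : Du3 (TN (M + 1) φ) = TN (M + 1) (Du3 φ) := by
          funext a b c d e f
          exact TN_Du3 hφE (M + 1) a b c d e f
        rw [f1]
        exact TN_Du1 (entire_Du3 hφE) (M + 1) u1 u3 l4 l6 l8 l10
      rw [g1]
      linear_combination hcomb
    have KEY6 : ∀ u1 u3 l4 l6 l8 l10 : ℂ,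
        Du3 (Du3 (TN (M + 1) φ)) u1 u3 l4 l6 l8 l10 = 0 := by
      intro u1 u3 l4 l6 l8 l10
      have B33ent : Ent1 (fun s : ℂ => Du3 (Du3 φ) u1 u3 (s ^ 4 * l4) (s ^ 6 * l6) (s ^ 8 * l8) (s ^ 10 * l10)) :=
        slice1_entire (entire_Du3 (entire_Du3 hφE)) u1 u3 l4 l6 l8 l10
      have hpt : (fun s : ℂ => (1 / 2) * Du3 (Du3 φ) u1 u3 (s ^ 4 * l4) (s ^ 6 * l6) (s ^ 8 * l8) (s ^ 10 * l10))
          = (fun s : ℂ => (10 * l10) * (s ^ 10 * Dl4 φ u1 u3 (s ^ 4 * l4) (s ^ 6 * l6) (s ^ 8 * l8) (s ^ 10 * l10)) + (-((4/5) * l4 * l8)) * (s ^ 12 * Dl6 φ u1 u3 (s ^ 4 * l4) (s ^ 6 * l6) (s ^ 8 * l8) (s ^ 10 * l10)) + (6 * l4 * l10 - (6/5) * l6 * l8) * (s ^ 14 * Dl8 φ u1 u3 (s ^ 4 * l4) (s ^ 6 * l6) (s ^ 8 * l8) (s ^ 10 * l10)) + (4 * l6 * l10 - (8/5) * l8 ^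 2) * (s ^ 16 * Dl10 φ u1 u3 (s ^ 4 * l4) (s ^ 6 * l6) (s ^ 8 * l8) (s ^ 10 * l10)) + ((3/5) * l8 * u3) * (s ^ 8 * Du1 φ u1 u3 (s ^ 4 * l4) (s ^ 6 * l6) (s ^ 8 * l8) (s ^ 10 * l10)) + ((1/10) * l8 * u1 ^ 2) * (s ^ 8 * φ u1 u3 (s ^ 4 * l4) (s ^ 6 * l6) (s ^ 8 * l8) (s ^ 10 * l10)) + (-(2 * l10 * u1 * u3)) * (s ^ 10 * φ u1 u3 (s ^ 4 * l4) (s ^ 6 * l6) (s ^ 8 * l8) (s ^ 10 * l10)) + ((3/10) * l8 * l4 * u3 ^ 2) * (s ^ 12 * φ u1 u3 (s ^ 4 * l4) (s ^ 6 * l6) (s ^ 8 * l8) (s ^ 10 * l10)) + ((1/2) * l6) * (s ^ 6 * φ u1 u3 (s ^ 4 * l4) (s ^ 6 * l6) (s ^ 8 * l8) (s ^ 10 * l10)) + (0) * (s ^ 1 * φ u1 u3 (s ^ 4 * l4) (s ^ 6 * l6) (s ^ 8 * l8) (s ^ 10 * l10))) := by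
        funext s
        linear_combination -heq6 u1 u3 (s ^ 4 * l4) (s ^ 6 * l6) (s ^ 8 * l8) (s ^ 10 * l10)
      have hL : iteratedDeriv (M + 1) (fun s : ℂ => (1 / 2) * Du3 (Du3 φ) u1 u3 (s ^ 4 * l4) (s ^ 6 * l6) (s ^ 8 * l8) (s ^ 10 * l10)) 0
          = (1 / 2) * iteratedDeriv (M + 1) (fun s : ℂ => Du3 (Du3 φ) u1 u3 (s ^ 4 * l4) (s ^ 6 * l6) (s ^ 8 * l8) (s ^ 10 * l10)) 0 :=
        itd_cmul (1 / 2) B33ent (M + 1) 0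
      have hR := itd_sum10 (M + 1) (10 * l10) (-((4/5) * l4 * l8)) (6 * l4 * l10 - (6/5) * l6 * l8) (4 * l6 * l10 - (8/5) * l8 ^ 2) ((3/5) * l8 * u3) ((1/10) * l8 * u1 ^ 2) (-(2 * l10 * u1 * u3)) ((3/10) * l8 * l4 * u3 ^ 2) ((1/2) * l6) (0) 10 12 14 16 8 8 10 12 6 1 (fun s : ℂ => Dl4 φ u1 u3 (s ^ 4 * l4) (s ^ 6 * l6) (s ^ 8 * l8) (s ^ 10 * l10)) (fun s : ℂ => Dl6 φ u1 u3 (s ^ 4 * l4) (s ^ 6 * l6) (s ^ 8 * l8) (s ^ 10 * l10)) (fun s : ℂ => Dl8 φ u1 u3 (s ^ 4 * l4) (s ^ 6 * l6) (s ^ 8 * l8) (s ^ 10 * l10)) (fun s : ℂ => Dl10 φ u1 u3 (s ^ 4 * l4) (s ^ 6 * l6) (s ^ 8 * l8) (s ^ 10 * l10)) (fun s : ℂ => Du1 φ u1 u3 (s ^ 4 * l4) (s ^ 6 * l6) (s ^ 8 * l8) (s ^ 10 * l10)) (fun s : ℂ => φ u1 u3 (s ^ 4 * l4) (s ^ 6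 * l6) (s ^ 8 * l8) (s ^ 10 * l10)) (fun s : ℂ => φ u1 u3 (s ^ 4 * l4) (s ^ 6 * l6) (s ^ 8 * l8) (s ^ 10 * l10)) (fun s : ℂ => φ u1 u3 (s ^ 4 * l4) (s ^ 6 * l6) (s ^ 8 * l8) (s ^ 10 * l10)) (fun s : ℂ => φ u1 u3 (s ^ 4 * l4) (s ^ 6 * l6) (s ^ 8 * l8) (s ^ 10 * l10)) (fun s : ℂ => φ u1 u3 (s ^ 4 * l4) (s ^ 6 * l6) (s ^ 8 * l8) (s ^ 10 * l10)) (slice1_entire (entire_Dl4 hφE) u1 u3 l4 l6 l8 l10) (slice1_entire (entire_Dl6 hφE) u1 u3 l4 l6 l8 l10) (slice1_entire (entire_Dl8 hφE) u1 u3 l4 l6 l8 l10) (slice1_entire (entire_Dl10 hφE) u1 u3 l4 l6 l8 l10) (slice1_entire (entire_Du1 hφE) u1 u3 l4 l6 l8 l10) (slice1_entire hφE u1 u3 l4 l6 l8 l10) (slice1_entire hφE u1 u3 l4 l6 l8 l10) (slice1_entire hφE u1 u3 l4 l6 l8 l10) (slice1_entire hφE u1 u3 l4 l6 l8 l10) (slice1_entire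 hφE u1 u3 l4 l6 l8 l10)
      have hcomb : (1 / 2) * iteratedDeriv (M + 1) (fun s : ℂ => Du3 (Du3 φ) u1 u3 (s ^ 4 * l4) (s ^ 6 * l6) (s ^ 8 * l8) (s ^ 10 * l10)) 0
          = (10 * l10) * (((M + 1).descFactorial 10 : ℂ) * iteratedDeriv (M + 1 - 10) (fun s : ℂ => Dl4 φ u1 u3 (s ^ 4 * l4) (s ^ 6 * l6) (s ^ 8 * l8) (s ^ 10 * l10)) 0) + (-((4/5) * l4 * l8)) * (((M + 1).descFactorial 12 : ℂ) * iteratedDeriv (M + 1 - 12) (fun s : ℂ => Dl6 φ u1 u3 (s ^ 4 * l4) (s ^ 6 * l6) (s ^ 8 * l8) (s ^ 10 * l10)) 0) + (6 * l4 * l10 - (6/5) * l6 * l8) * (((M + 1).descFactorial 14 : ℂ) * iteratedDeriv (M + 1 - 14) (fun s : ℂ => Dl8 φ u1 u3 (s ^ 4 * l4) (s ^ 6 * l6) (s ^ 8 * l8) (s ^ 10 * l10)) 0) + (4 * l6 * l10 - (8/5) * l8 ^ 2) * (((M + 1).descFactorial 16 : ℂ) * iteratedDeriv (M + 1 - 16)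 (fun s : ℂ => Dl10 φ u1 u3 (s ^ 4 * l4) (s ^ 6 * l6) (s ^ 8 * l8) (s ^ 10 * l10)) 0) + ((3/5) * l8 * u3) * (((M + 1).descFactorial 8 : ℂ) * iteratedDeriv (M + 1 - 8) (fun s : ℂ => Du1 φ u1 u3 (s ^ 4 * l4) (s ^ 6 * l6) (s ^ 8 * l8) (s ^ 10 * l10)) 0) + ((1/10) * l8 * u1 ^ 2) * (((M + 1).descFactorial 8 : ℂ) * iteratedDeriv (M + 1 - 8) (fun s : ℂ => φ u1 u3 (s ^ 4 * l4) (s ^ 6 * l6) (s ^ 8 * l8) (s ^ 10 * l10)) 0) + (-(2 * l10 * u1 * u3)) * (((M + 1).descFactorial 10 : ℂ) * iteratedDeriv (M + 1 - 10) (fun s : ℂ => φ u1 u3 (s ^ 4 * l4) (s ^ 6 * l6) (s ^ 8 * l8) (s ^ 10 * l10)) 0) + ((3/10) * l8 * l4 * u3 ^ 2) * (((M + 1).descFactorial 12 : ℂ) * iteratedDeriv (M + 1 - 12) (fun s : ℂ => φ u1 u3 (s ^ 4 * l4) (s ^ 6 * l6) (s ^ 8 * l8) (s ^ 10 * l10))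 0) + ((1/2) * l6) * (((M + 1).descFactorial 6 : ℂ) * iteratedDeriv (M + 1 - 6) (fun s : ℂ => φ u1 u3 (s ^ 4 * l4) (s ^ 6 * l6) (s ^ 8 * l8) (s ^ 10 * l10)) 0) + (0) * (((M + 1).descFactorial 1 : ℂ) * iteratedDeriv (M + 1 - 1) (fun s : ℂ => φ u1 u3 (s ^ 4 * l4) (s ^ 6 * l6) (s ^ 8 * l8) (s ^ 10 * l10)) 0) := by
        rw [← hL, hpt]
        exact hR
      rw [VL4 10 (by norm_num : 4 < 10) u1 u3 l4 l6 l8 l10, VL6 12 (by norm_num : 6 < 12) u1 u3 l4 l6 l8 l10, VL8 14 (by norm_num : 8 < 14) u1 u3 l4 l6 l8 l10, VL10 16 (by norm_num : 10 < 16) u1 u3 l4 l6 l8 l10, VB1 8 (by norm_num : 1 ≤ 8) u1 u3 l4 l6 l8 l10, VP 8 (by norm_num : 1 ≤ 8) u1 u3 l4 l6 l8 l10, VP 10 (by norm_num : 1 ≤ 10) u1 u3 l4 l6 l8 l10, VP 12 (by norm_num : 1 ≤ 12) u1 u3 l4 l6 l8 l10, VP 6 (by norm_num : 1 ≤ 6)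 u1 u3 l4 l6 l8 l10] at hcomb
      have g1 : Du3 (Du3 (TN (M + 1) φ)) u1 u3 l4 l6 l8 l10
          = iteratedDeriv (M + 1) (fun s : ℂ => Du3 (Du3 φ) u1 u3 (s ^ 4 * l4) (s ^ 6 * l6) (s ^ 8 * l8) (s ^ 10 * l10)) 0 := by
        have f1 : Du3 (TN (M + 1) φ) = TN (M + 1) (Du3 φ) := by
          funext a b c d e f
          exact TN_Du3 hφE (M + 1) a b c d e f
        rw [f1]
        exact TN_Du3 (entire_Du3 hφE) (M + 1) u1 u3 l4 l6 l8 l10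
      rw [g1]
      linear_combination 2 * hcomb
    -- conclude via the endgame lemma
    have hm0 : ((M + 1 : ℕ) : ℂ) + 3 ≠ 0 := by
      have e : ((M + 1 : ℕ) : ℂ) + 3 = ((M + 4 : ℕ) : ℂ) := by push_cast; ring
      rw [e]
      exact_mod_cast (by omega : (M + 4 : ℕ) ≠ 0)
    have hm1 : ((M + 1 : ℕ) : ℂ) + 3 ≠ 1 := by
      have e : ((M + 1 : ℕ) : ℂ) + 3 = ((M + 4 : ℕ) : ℂ) := by push_cast; ring
      rw [e]
      exact_mod_cast (by omega : (M + 4 : ℕ) ≠ 1)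
    have hm3 : ((M + 1 : ℕ) : ℂ) + 3 ≠ 3 := by
      have e : ((M + 1 : ℕ) : ℂ) + 3 = ((M + 4 : ℕ) : ℂ) := by push_cast; ring
      rw [e]
      exact_mod_cast (by omega : (M + 4 : ℕ) ≠ 3)
    have hh2 : ∀ u1 u3 l4 l6 l8 l10 : ℂ,
        (1 / 2) * Du1 (Du1 (TN (M + 1) φ)) u1 u3 l4 l6 l8 l10
          + u1 * Du3 (TN (M + 1) φ) u1 u3 l4 l6 l8 l10 = 0 := KEY2
    intro u1 u3 l4 l6 l8 l10
    exact endgame (TN (M + 1) φ) (TN_entire hφE (M + 1)) (((M + 1 : ℕ) : ℂ) + 3)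
      hm0 hm1 hm3 KEY0 hh2 KEY4 KEY6 u1 u3 l4 l6 l8 l10

end SigmaUniq

namespace SigmaUniq

/-- pointwise difference of two `F6` functions -/
def subF (f g : F6) : F6 := fun u1 u3 l4 l6 l8 l10 =>
  f u1 u3 l4 l6 l8 l10 - g u1 u3 l4 l6 l8 l10

variable {f g : F6}

lemma entire_subF (hf : IsEntire6 f) (hg : IsEntire6 g) : IsEntire6 (subF f g) :=
  AnalyticOnNhd.sub hf hg

lemma Du1_subF (hf : IsEntire6 f) (hg : IsEntire6 g) (u1 u3 l4 l6 l8 l10 : ℂ) :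
    Du1 (subF f g) u1 u3 l4 l6 l8 l10
      = Du1 f u1 u3 l4 l6 l8 l10 - Du1 g u1 u3 l4 l6 l8 l10 := by
  show deriv (fun t => f t u3 l4 l6 l8 l10 - g t u3 l4 l6 l8 l10) u1 = _
  rw [deriv_fun_sub ((diff_slice_Du1 hf u1 u3 l4 l6 l8 l10) u1)
    ((diff_slice_Du1 hg u1 u3 l4 l6 l8 l10) u1)]
  rfl

lemma Du3_subF (hf : IsEntire6 f) (hg : IsEntire6 g) (u1 u3 l4 l6 l8 l10 : ℂ) :
    Du3 (subF f g) u1 u3 l4 l6 l8 l10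
      = Du3 f u1 u3 l4 l6 l8 l10 - Du3 g u1 u3 l4 l6 l8 l10 := by
  show deriv (fun t => f u1 t l4 l6 l8 l10 - g u1 t l4 l6 l8 l10) u3 = _
  rw [deriv_fun_sub ((diff_slice_Du3 hf u1 u3 l4 l6 l8 l10) u3)
    ((diff_slice_Du3 hg u1 u3 l4 l6 l8 l10) u3)]
  rfl

lemma Dl4_subF (hf : IsEntire6 f) (hg : IsEntire6 g) (u1 u3 l4 l6 l8 l10 : ℂ) :
    Dl4 (subF f g) u1 u3 l4 l6 l8 l10
      = Dl4 f u1 u3 l4 l6 l8 l10 - Dl4 g u1 u3 l4 l6 l8 l10 := by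
  show deriv (fun t => f u1 u3 t l6 l8 l10 - g u1 u3 t l6 l8 l10) l4 = _
  rw [deriv_fun_sub ((diff_slice_Dl4 hf u1 u3 l4 l6 l8 l10) l4)
    ((diff_slice_Dl4 hg u1 u3 l4 l6 l8 l10) l4)]
  rfl

lemma Dl6_subF (hf : IsEntire6 f) (hg : IsEntire6 g) (u1 u3 l4 l6 l8 l10 : ℂ) :
    Dl6 (subF f g) u1 u3 l4 l6 l8 l10
      = Dl6 f u1 u3 l4 l6 l8 l10 - Dl6 g u1 u3 l4 l6 l8 l10 := by
  show deriv (fun t => f u1 u3 l4 t l8 l10 - g u1 u3 l4 t l8 l10) l6 = _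
  rw [deriv_fun_sub ((diff_slice_Dl6 hf u1 u3 l4 l6 l8 l10) l6)
    ((diff_slice_Dl6 hg u1 u3 l4 l6 l8 l10) l6)]
  rfl

lemma Dl8_subF (hf : IsEntire6 f) (hg : IsEntire6 g) (u1 u3 l4 l6 l8 l10 : ℂ) :
    Dl8 (subF f g) u1 u3 l4 l6 l8 l10
      = Dl8 f u1 u3 l4 l6 l8 l10 - Dl8 g u1 u3 l4 l6 l8 l10 := by
  show deriv (fun t => f u1 u3 l4 l6 t l10 - g u1 u3 l4 l6 t l10) l8 = _
  rw [deriv_fun_sub ((diff_slice_Dl8 hf u1 u3 l4 l6 l8 l10) l8)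
    ((diff_slice_Dl8 hg u1 u3 l4 l6 l8 l10) l8)]
  rfl

lemma Dl10_subF (hf : IsEntire6 f) (hg : IsEntire6 g) (u1 u3 l4 l6 l8 l10 : ℂ) :
    Dl10 (subF f g) u1 u3 l4 l6 l8 l10
      = Dl10 f u1 u3 l4 l6 l8 l10 - Dl10 g u1 u3 l4 l6 l8 l10 := by
  show deriv (fun t => f u1 u3 l4 l6 l8 t - g u1 u3 l4 l6 l8 t) l10 = _
  rw [deriv_fun_sub ((diff_slice_Dl10 hf u1 u3 l4 l6 l8 l10) l10)
    ((diff_slice_Dl10 hg u1 u3 l4 l6 l8 l10) l10)]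
  rfl

end SigmaUniq


open SigmaUniq in
/-- Uniqueness of the genus-2 hyperelliptic sigma function: any two entire solutions of
the system of heat equations with the initial condition `u₃ − (1/3)u₁³` coincide. -/
theorem sigma_heat_uniqueness (ψ₁ ψ₂ : F6)
    (h₁e : IsEntire6 ψ₁) (h₂e : IsEntire6 ψ₂)
    (h₁ : SigmaHeatSolution ψ₁) (h₂ : SigmaHeatSolution ψ₂) :
    ψ₁ = ψ₂ := by
  obtain ⟨e10, e12, e14, e16, init1⟩ := h₁
  obtain ⟨e20, e22, e24, e26, init2⟩ := h₂
  have hE : IsEntire6 (subF ψ₁ ψ₂) := entire_subF h₁e h₂e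
  have hs1 : Du1 (subF ψ₁ ψ₂) = subF (Du1 ψ₁) (Du1 ψ₂) := by
    funext a b c d e f'
    exact Du1_subF h₁e h₂e a b c d e f'
  have hs3 : Du3 (subF ψ₁ ψ₂) = subF (Du3 ψ₁) (Du3 ψ₂) := by
    funext a b c d e f'
    exact Du3_subF h₁e h₂e a b c d e f'
  have hl4 : Dl4 (subF ψ₁ ψ₂) = subF (Dl4 ψ₁) (Dl4 ψ₂) := by
    funext a b c d e f'
    exact Dl4_subF h₁e h₂e a b c d e f'
  have hl6 : Dl6 (subF ψ₁ ψ₂) = subF (Dl6 ψ₁) (Dl6 ψ₂) := by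
    funext a b c d e f'
    exact Dl6_subF h₁e h₂e a b c d e f'
  have hl8 : Dl8 (subF ψ₁ ψ₂) = subF (Dl8 ψ₁) (Dl8 ψ₂) := by
    funext a b c d e f'
    exact Dl8_subF h₁e h₂e a b c d e f'
  have hl10 : Dl10 (subF ψ₁ ψ₂) = subF (Dl10 ψ₁) (Dl10 ψ₂) := by
    funext a b c d e f'
    exact Dl10_subF h₁e h₂e a b c d e f'
  have hs11 : Du1 (subF (Du1 ψ₁) (Du1 ψ₂)) = subF (Du1 (Du1 ψ₁)) (Du1 (Du1 ψ₂)) := by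
    funext a b c d e f'
    exact Du1_subF (entire_Du1 h₁e) (entire_Du1 h₂e) a b c d e f'
  have hs13 : Du1 (subF (Du3 ψ₁) (Du3 ψ₂)) = subF (Du1 (Du3 ψ₁)) (Du1 (Du3 ψ₂)) := by
    funext a b c d e f'
    exact Du1_subF (entire_Du3 h₁e) (entire_Du3 h₂e) a b c d e f'
  have hs33 : Du3 (subF (Du3 ψ₁) (Du3 ψ₂)) = subF (Du3 (Du3 ψ₁)) (Du3 (Du3 ψ₂)) := by
    funext a b c d e f'
    exact Du3_subF (entire_Du3 h₁e) (entire_Du3 h₂e) a b c d e f'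
  have heq0 : ∀ u1 u3 l4 l6 l8 l10 : ℂ,
      4 * l4 * Dl4 (subF ψ₁ ψ₂) u1 u3 l4 l6 l8 l10 + 6 * l6 * Dl6 (subF ψ₁ ψ₂) u1 u3 l4 l6 l8 l10 +
        8 * l8 * Dl8 (subF ψ₁ ψ₂) u1 u3 l4 l6 l8 l10 + 10 * l10 * Dl10 (subF ψ₁ ψ₂) u1 u3 l4 l6 l8 l10 =
      u1 * Du1 (subF ψ₁ ψ₂) u1 u3 l4 l6 l8 l10 + 3 * u3 * Du3 (subF ψ₁ ψ₂) u1 u3 l4 l6 l8 l10 -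
        3 * subF ψ₁ ψ₂ u1 u3 l4 l6 l8 l10 := by
    intro u1 u3 l4 l6 l8 l10
    simp only [hs1, hs3, hl4, hl6, hl8, hl10, hs11, hs13, hs33, subF]
    linear_combination e10 u1 u3 l4 l6 l8 l10 - e20 u1 u3 l4 l6 l8 l10
  have heq2 : ∀ u1 u3 l4 l6 l8 l10 : ℂ,
      6 * l6 * Dl4 (subF ψ₁ ψ₂) u1 u3 l4 l6 l8 l10 +
        (8 * l8 - (12 / 5) * l4 ^ 2) * Dl6 (subF ψ₁ ψ₂) u1 u3 l4 l6 l8 l10 +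
        (10 * l10 - (8 / 5) * l4 * l6) * Dl8 (subF ψ₁ ψ₂) u1 u3 l4 l6 l8 l10 -
        (4 / 5) * l4 * l8 * Dl10 (subF ψ₁ ψ₂) u1 u3 l4 l6 l8 l10 =
      (1 / 2) * Du1 (Du1 (subF ψ₁ ψ₂)) u1 u3 l4 l6 l8 l10 -
        (4 / 5) * l4 * u3 * Du1 (subF ψ₁ ψ₂) u1 u3 l4 l6 l8 l10 +
        u1 * Du3 (subF ψ₁ ψ₂) u1 u3 l4 l6 l8 l10 +
        (-(3 / 10) * l4 * u1 ^ 2 + (1 / 10) * (15 * l8 - 4 * l4 ^ 2) * u3 ^ 2) *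
          subF ψ₁ ψ₂ u1 u3 l4 l6 l8 l10 := by
    intro u1 u3 l4 l6 l8 l10
    simp only [hs1, hs3, hl4, hl6, hl8, hl10, hs11, hs13, hs33, subF]
    linear_combination e12 u1 u3 l4 l6 l8 l10 - e22 u1 u3 l4 l6 l8 l10
  have heq4 : ∀ u1 u3 l4 l6 l8 l10 : ℂ,
      8 * l8 * Dl4 (subF ψ₁ ψ₂) u1 u3 l4 l6 l8 l10 +
        (10 * l10 - (8 / 5) * l4 * l6) * Dl6 (subF ψ₁ ψ₂) u1 u3 l4 l6 l8 l10 +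
        (4 * l4 * l8 - (12 / 5) * l6 ^ 2) * Dl8 (subF ψ₁ ψ₂) u1 u3 l4 l6 l8 l10 +
        (6 * l4 * l10 - (6 / 5) * l6 * l8) * Dl10 (subF ψ₁ ψ₂) u1 u3 l4 l6 l8 l10 =
      Du1 (Du3 (subF ψ₁ ψ₂)) u1 u3 l4 l6 l8 l10 -
        (6 / 5) * l6 * u3 * Du1 (subF ψ₁ ψ₂) u1 u3 l4 l6 l8 l10 +
        l4 * u3 * Du3 (subF ψ₁ ψ₂) u1 u3 l4 l6 l8 l10 +
        (-(1 / 5) * l6 * u1 ^ 2 + l8 * u1 * u3 +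
          (1 / 10) * (30 * l10 - 6 * l6 * l4) * u3 ^ 2 - l4) * subF ψ₁ ψ₂ u1 u3 l4 l6 l8 l10 := by
    intro u1 u3 l4 l6 l8 l10
    simp only [hs1, hs3, hl4, hl6, hl8, hl10, hs11, hs13, hs33, subF]
    linear_combination e14 u1 u3 l4 l6 l8 l10 - e24 u1 u3 l4 l6 l8 l10
  have heq6 : ∀ u1 u3 l4 l6 l8 l10 : ℂ,
      10 * l10 * Dl4 (subF ψ₁ ψ₂) u1 u3 l4 l6 l8 l10 -
        (4 / 5) * l4 * l8 * Dl6 (subF ψ₁ ψ₂) u1 u3 l4 l6 l8 l10 +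
        (6 * l4 * l10 - (6 / 5) * l6 * l8) * Dl8 (subF ψ₁ ψ₂) u1 u3 l4 l6 l8 l10 +
        (4 * l6 * l10 - (8 / 5) * l8 ^ 2) * Dl10 (subF ψ₁ ψ₂) u1 u3 l4 l6 l8 l10 =
      (1 / 2) * Du3 (Du3 (subF ψ₁ ψ₂)) u1 u3 l4 l6 l8 l10 -
        (3 / 5) * l8 * u3 * Du1 (subF ψ₁ ψ₂) u1 u3 l4 l6 l8 l10 +
        (-(1 / 10) * l8 * u1 ^ 2 + 2 * l10 * u1 * u3 - (3 / 10) * l8 * l4 * u3 ^ 2 -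
          (1 / 2) * l6) * subF ψ₁ ψ₂ u1 u3 l4 l6 l8 l10 := by
    intro u1 u3 l4 l6 l8 l10
    simp only [hs1, hs3, hl4, hl6, hl8, hl10, hs11, hs13, hs33, subF]
    linear_combination e16 u1 u3 l4 l6 l8 l10 - e26 u1 u3 l4 l6 l8 l10
  have hinit : ∀ u1 u3 : ℂ, subF ψ₁ ψ₂ u1 u3 0 0 0 0 = 0 := by
    intro u1 u3
    show ψ₁ u1 u3 0 0 0 0 - ψ₂ u1 u3 0 0 0 0 = 0
    rw [init1 u1 u3, init2 u1 u3]
    ring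
  have hall := TN_all_zero (subF ψ₁ ψ₂) hE heq0 heq2 heq4 heq6 hinit
  have hzero : ∀ u1 u3 l4 l6 l8 l10 : ℂ, subF ψ₁ ψ₂ u1 u3 l4 l6 l8 l10 = 0 := by
    intro u1 u3 l4 l6 l8 l10
    have hg : Ent1 (fun s : ℂ => subF ψ₁ ψ₂ u1 u3 (s ^ 4 * l4) (s ^ 6 * l6) (s ^ 8 * l8) (s ^ 10 * l10)) :=
      slice1_entire hE u1 u3 l4 l6 l8 l10
    have htay := Complex.taylorSeries_eq_of_entire' (c := 0) (z := 1) hg.differentiable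
    have hz : ∀ n : ℕ, iteratedDeriv n
        (fun s : ℂ => subF ψ₁ ψ₂ u1 u3 (s ^ 4 * l4) (s ^ 6 * l6) (s ^ 8 * l8) (s ^ 10 * l10)) 0 = 0 :=
      fun n => hall n u1 u3 l4 l6 l8 l10
    simp only [hz, mul_zero, zero_mul, tsum_zero] at htay
    have e1 : subF ψ₁ ψ₂ u1 u3 l4 l6 l8 l10
        = (fun s : ℂ => subF ψ₁ ψ₂ u1 u3 (s ^ 4 * l4) (s ^ 6 * l6) (s ^ 8 * l8) (s ^ 10 * l10)) 1 := by
      norm_num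
    exact e1.trans htay.symm
  funext u1 u3 l4 l6 l8 l10
  have := hzero u1 u3 l4 l6 l8 l10
  have h := sub_eq_zero.mp this
  exact h
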